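/- arXiv:2002.01968 — 9 statements merged into one kernel-verified Lean document; each statement's English description precedes it below -/
import Mathlib

section
/- If a word w contains two distinct occurrences of the same factor x that overlap each other (i.e., x = w[i..i+n-1] = w[j..j+n-1] with i < j and 0 < j - i < n, where n = |x|), then w contains an overlap as a factor. -/
/-- `x` occurs in `w` at position `i`: `w[i..i+|x|-1] = x`. -/
def Occurs {α : Type*} (x w : List α) (i : ℕ) : Prop := x <+: w.drop i

/-- `w` contains two disjoint occurrences of `x`. -/
def TwoDisjointOccs {α : Type*} (x w : List α) : Prop :=
  ∃ i j : ℕ, Occurs x w i ∧ Occurs x w j ∧ i + x.length ≤ j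

/-- `w` has period `q ≥ 1`: `w[i] = w[i+q]` whenever both are defined. -/
def HasPeriod {α : Type*} (w : List α) (q : ℕ) : Prop :=
  1 ≤ q ∧ ∀ (i : ℕ) (h : i + q < w.length), w.get ⟨i, by omega⟩ = w.get ⟨i + q, h⟩

/-- The smallest period of `w`. -/
noncomputable def minPeriod {α : Type*} (w : List α) : ℕ := sInf {q | HasPeriod w q}

/-- A word is primitive if it is nonempty and not a proper power. -/
def Primitive {α : Type*} (w : List α) : Prop :=
  w ≠ [] ∧ ∀ (x : List α) (m : ℕ), 2 ≤ m → w ≠ (List.replicate m x).flatten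

/-- `x` is a border of `w`. -/
def IsBorder {α : Type*} (x w : List α) : Prop :=
  x ≠ [] ∧ x ≠ w ∧ x <+: w ∧ x <:+ w

def Unbordered {α : Type*} (w : List α) : Prop := ∀ x, ¬ IsBorder x w

/-- An overlap: a word of the form `a x a x a`. -/
def IsOverlap {α : Type*} (u : List α) : Prop :=
  ∃ (a : α) (x : List α), u = [a] ++ x ++ [a] ++ x ++ [a]

/-- A `t`-overlap: a word of the form `x x x'` where `x` is nonempty of length ≥ t
and `x'` is the prefix of `x` of length `t`. -/
def IsTOverlap {α : Type*} (t : ℕ) (u : List α) : Prop :=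
  ∃ x : List α, x ≠ [] ∧ t ≤ x.length ∧ u = x ++ x ++ x.take t

/-- `w` contains a split occurrence of a `t`-overlap: a factor `x y z` with `x z` a `t`-overlap. -/
def HasSplitTOverlap {α : Type*} (t : ℕ) (w : List α) : Prop :=
  ∃ x y z : List α, (x ++ y ++ z) <:+: w ∧ IsTOverlap t (x ++ z)

/-- `w` contains a reversed split occurrence of a `t`-overlap:
a factor `x y z` with `z x` a `t`-overlap. -/
def HasRevSplitTOverlap {α : Type*} (t : ℕ) (w : List α) : Prop :=
  ∃ x y z : List α, (x ++ y ++ z) <:+: w ∧ IsTOverlap t (z ++ x)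

theorem overlapping_occurrences_give_overlap {α : Type*} (w x : List α) (i j : ℕ)
    (hi : Occurs x w i) (hj : Occurs x w j) (hij : i < j) (hover : j - i < x.length) :
    ∃ u : List α, IsOverlap u ∧ u <:+: w := by
  obtain ⟨t, ht⟩ := hi
  set p := j - i with hp
  have hp1 : 1 ≤ p := by omega
  have hpn : p < x.length := hover
  have hxne : x ≠ [] := by intro h; simp [h] at hpn
  have hdj : List.drop j w = x.drop p ++ t := by
    have h1 : List.drop j w = List.drop p (List.drop i w) := by
      rw [List.drop_drop]; congr 1; omega
    rw [h1, ← ht, List.drop_append_of_le_length (le_of_lt hpn)]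
  have hx2 : x <+: x.drop p ++ t := by rw [← hdj]; exact hj
  have hdpne : x.drop p ≠ [] := by
    intro h
    have := List.drop_eq_nil_iff.mp h
    omega
  have h1 : x.take 1 = (x.drop p).take 1 := by
    obtain ⟨u, hu⟩ := hx2
    have := congrArg (List.take 1) hu
    rwa [List.take_append_of_le_length, List.take_append_of_le_length] at this
    · simp only [List.length_drop]; omega
    · exact Nat.one_le_iff_ne_zero.mpr (by simpa [List.length_eq_zero_iff] using hxne)
  have e1 : x.take (p + 1) = x.take p ++ x.take 1 := by
    rw [List.take_add, ← h1]
  have e2 : x.take p = x.take 1 ++ (x.drop 1).take (p - 1) := by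
    have hpe : p = 1 + (p - 1) := by omega
    nth_rewrite 1 [hpe]
    rw [List.take_add]
  obtain ⟨a, x', hax⟩ := List.exists_cons_of_ne_nil hxne
  have hs : x.take 1 = [a] := by rw [hax]; simp
  set y := (x.drop 1).take (p - 1) with hy
  refine ⟨[a] ++ y ++ [a] ++ y ++ [a], ⟨a, y, rfl⟩, ?_⟩
  have key : ([a] ++ y ++ [a] ++ y ++ [a] : List α) = x.take p ++ x.take (p + 1) := by
    rw [e1, e2, hs]; simp
  rw [key]
  have hpre : x.take p ++ x.take (p + 1) <+: List.drop i w := by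
    rw [← ht]
    calc x.take p ++ x.take (p + 1) <+: x.take p ++ (x.drop p ++ t) :=
          (List.prefix_append_right_inj _).mpr ((List.take_prefix _ _).trans hx2)
      _ = x ++ t := by rw [← List.append_assoc, List.take_append_drop]
  exact hpre.isInfix.trans (List.drop_suffix i w).isInfix
end

section
/- For all integers k ≥ 1 and t ≥ 0, there exists an integer N such that every word over a k-letter alphabet of length at least N contains a split occurrence of a t-overlap. Equivalently, every word over a k-letter alphabet avoiding split occurrences of t-overlaps is finite (has length less than N). -/
section Aux

variable {α : Type*}

/-- Segment concatenation: `w[a..b) ++ w[b..c) = w[a..c)`. -/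
lemma seg_append (w : List α) {a b c : ℕ} (hab : a ≤ b) (hbc : b ≤ c) :
    (w.drop a).take (b - a) ++ (w.drop b).take (c - b) = (w.drop a).take (c - a) := by
  have h1 : w.drop b = (w.drop a).drop (b - a) := by
    rw [List.drop_drop]
    congr 1
    omega
  have h2 : c - a = (b - a) + (c - b) := by omega
  rw [h1, h2, List.take_add]

lemma seg_infix (w : List α) (a n : ℕ) : (w.drop a).take n <:+: w :=
  (List.take_prefix n (w.drop a)).isInfix.trans (List.drop_suffix a w).isInfix

lemma hasSplit_of_infix {t : ℕ} {w w' : List α} (h : w' <:+: w)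
    (h2 : HasSplitTOverlap t w') : HasSplitTOverlap t w := by
  obtain ⟨x, y, z, h1, h3⟩ := h2
  exact ⟨x, y, z, h1.trans h, h3⟩

end Aux

/-- Key inductive lemma: words whose length-`t` factors all lie in a set of
cardinality `≤ j` cannot be too long without containing a split `t`-overlap. -/
lemma key_lemma (k t : ℕ) : ∀ j : ℕ, ∃ N : ℕ, t + 1 ≤ N ∧
    ∀ w : List (Fin k), ∀ S : Finset (List (Fin k)),
    S.card ≤ j → (∀ i, i + t ≤ w.length → (w.drop i).take t ∈ S) → N ≤ w.length →
    HasSplitTOverlap t w := by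
  intro j
  induction j with
  | zero =>
    refine ⟨t + 1, le_refl _, fun w S hcard hS hlen => ?_⟩
    exfalso
    have h0 : (w.drop 0).take t ∈ S := hS 0 (by omega)
    have hS0 : S = ∅ := Finset.card_eq_zero.mp (by omega)
    simp [hS0] at h0
  | succ j IH =>
    classical
    obtain ⟨Nj, hNjt, hNj⟩ := IH
    set m : ℕ := max t 1 with hm
    set G : ℕ := Nj + t + m with hGdef
    set F : Finset (List (Fin k)) := (List.finite_length_le (Fin k) (m + G)).toFinset with hF
    set n : ℕ := F.card with hn
    refine ⟨(n + 3) * (m + G) + (G + m + t + 1), ?_, fun w S hcard hS hlen => ?_⟩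
    · calc t + 1 ≤ G + m + t + 1 := by omega
        _ ≤ (n + 3) * (m + G) + (G + m + t + 1) := Nat.le_add_left _ _
    -- basic bounds
    have hNw : (n + 3) * (m + G) + (G + m + t + 1) ≤ w.length := hlen
    have htw : t ≤ w.length := by
      have h1 : t ≤ G + m + t + 1 := by omega
      have h2 : G + m + t + 1 ≤ w.length := le_trans (Nat.le_add_left _ _) hNw
      omega
    set p : List (Fin k) := w.take t with hp
    have hpS : p ∈ S := by
      have := hS 0 (by omega)
      simpa [hp] using this
    by_cases hcase : ∃ c, c + G ≤ w.length ∧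
        ∀ i, c ≤ i → i + t ≤ c + G → (w.drop i).take t ≠ p
    · -- Case (ii): a `p`-free window; recurse with `S.erase p`.
      obtain ⟨c, hcG, hwin⟩ := hcase
      set w' : List (Fin k) := (w.drop c).take G with hw'
      have hw'len : w'.length = G := by
        simp only [hw', List.length_take, List.length_drop]
        omega
      have hfac : ∀ i', i' + t ≤ G → (w'.drop i').take t = (w.drop (c + i')).take t := by
        intro i' hi'
        simp only [hw', List.drop_take, List.drop_drop]
        rw [List.take_take]
        congr 1
        omega
      refine hasSplit_of_infix (seg_infix w c G) (hNj w' (S.erase p) ?_ ?_ ?_)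
      · rw [Finset.card_erase_of_mem hpS]; omega
      · intro i hi
        rw [hw'len] at hi
        rw [hfac i hi]
        refine Finset.mem_erase.mpr ⟨?_, hS (c + i) (by omega)⟩
        exact hwin (c + i) (by omega) (by omega)
      · omega
    · -- Case (i): `p` occurs in every window of length `G`.
      push_neg at hcase
      have H' : ∀ c, ∃ i, c ≤ i ∧
          (c + G ≤ w.length → (i + t ≤ c + G ∧ (w.drop i).take t = p)) := by
        intro c
        by_cases hc : c + G ≤ w.length
        · obtain ⟨i, hi1, hi2, hi3⟩ := hcase c hc
          exact ⟨i, hi1, fun _ => ⟨hi2, hi3⟩⟩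
        · exact ⟨c, le_refl _, fun h => absurd h hc⟩
      choose nxt hn1 hn2 using H'
      -- the sequence of occurrence positions
      let q : ℕ → ℕ := fun i0 => Nat.rec 0 (fun _ prev => nxt (prev + m)) i0
      have hq0 : q 0 = 0 := rfl
      have hqs : ∀ i, q (i + 1) = nxt (q i + m) := fun i => rfl
      have hgap : ∀ i, q i + m ≤ q (i + 1) := by
        intro i
        rw [hqs]
        exact hn1 (q i + m)
      have hmono : Monotone q :=
        monotone_nat_of_le_succ (fun i => le_trans (Nat.le_add_right _ m) (hgap i))
      have hmulle : ∀ a b : ℕ, a ≤ b → a * (m + G) ≤ b * (m + G) :=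
        fun a b h => Nat.mul_le_mul h (le_refl _)
      have htot : ∀ i : ℕ, i ≤ n + 3 → i * (m + G) ≤ w.length :=
        fun i h => le_trans (hmulle i (n + 3) h) (le_trans (Nat.le_add_right _ _) hNw)
      -- bound on the positions
      have hb : ∀ i, i ≤ n + 2 → q i ≤ i * (m + G) := by
        intro i
        induction i with
        | zero => intro _; simp [hq0]
        | succ i ih =>
          intro hi
          have hqi : q i ≤ i * (m + G) := ih (by omega)
          have hcnd : q i + m + G ≤ w.length := by
            have h1 : q i + m + G ≤ i * (m + G) + (m + G) := by omega
            have h2 : i * (m + G) + (m + G) = (i + 1) * (m + G) := (Nat.succ_mul i (m + G)).symm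
            have h3 : (i + 1) * (m + G) ≤ w.length := htot (i + 1) (by omega)
            omega
          have := (hn2 (q i + m) hcnd).1
          rw [← hqs] at this
          have h2 : i * (m + G) + (m + G) = (i + 1) * (m + G) := (Nat.succ_mul i (m + G)).symm
          omega
      have hcond : ∀ i, i ≤ n + 1 → q i + m + G ≤ w.length := by
        intro i hi
        have hqi : q i ≤ i * (m + G) := hb i (by omega)
        have h1 : q i + m + G ≤ i * (m + G) + (m + G) := by omega
        have h2 : i * (m + G) + (m + G) = (i + 1) * (m + G) := (Nat.succ_mul i (m + G)).symm
        have h3 : (i + 1) * (m + G) ≤ w.length := htot (i + 1) (by omega)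
        omega
      have hstep : ∀ i, i ≤ n + 1 → q (i + 1) ≤ q i + m + G := by
        intro i hi
        have := (hn2 (q i + m) (hcond i hi)).1
        rw [← hqs] at this
        omega
      have hocc : ∀ i, i ≤ n + 2 → q i + t ≤ w.length ∧ (w.drop (q i)).take t = p := by
        intro i hi
        match i with
        | 0 => exact ⟨by rw [hq0]; omega, by simp [hq0, hp]⟩
        | i + 1 =>
          have hcnd := hcond i (by omega)
          obtain ⟨h1, h2⟩ := hn2 (q i + m) hcnd
          rw [← hqs] at h1 h2
          exact ⟨by omega, h2⟩
      -- blocks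
      set f : ℕ → List (Fin k) := fun i => (w.drop (q i)).take (q (i + 1) - q i) with hf'
      have hlenf : ∀ i, i ≤ n + 1 → (f i).length = q (i + 1) - q i := by
        intro i hi
        have h1 : q (i + 1) + t ≤ w.length := (hocc (i + 1) (by omega)).1
        simp only [hf', List.length_take, List.length_drop]
        omega
      -- pigeonhole
      have hmaps : ∀ a ∈ Finset.range (n + 2), f a ∈ F := by
        intro a ha
        rw [Finset.mem_range] at ha
        rw [hF, Set.Finite.mem_toFinset]
        have h1 : q (a + 1) ≤ q a + m + G := hstep a (by omega)
        have h2 : (f a).length ≤ q (a + 1) - q a := by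
          simp only [hf', List.length_take, List.length_drop]; omega
        show (f a).length ≤ m + G
        omega
      obtain ⟨i0, hi0, j0, hj0, hij0, hfij0⟩ :=
        Finset.exists_ne_map_eq_of_card_lt_of_maps_to
          (s := Finset.range (n + 2)) (t := F) (by rw [← hn]; simp) hmaps
      rw [Finset.mem_range] at hi0 hj0
      -- reduce to ordered pair
      have main : ∀ i j : ℕ, i < j → j ≤ n + 1 → f i = f j → HasSplitTOverlap t w := by
        intro i j hij hjn hfij
        set x : List (Fin k) := f j with hx
        have hxfi : x = f i := hfij.symm
        have hgapj := hgap j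
        have hgapi := hgap i
        have hxlen : x.length = q (j + 1) - q j := hlenf j hjn
        have hxleni : x.length = q (i + 1) - q i := by rw [hxfi]; exact hlenf i (by omega)
        have hmx : m ≤ x.length := by omega
        have htm : t ≤ m := le_max_left t 1
        have hxt : t ≤ x.length := le_trans htm hmx
        have hxne : x ≠ [] := by
          intro hnil
          rw [hnil] at hxlen
          simp only [List.length_nil] at hxlen
          omega
        have hoccj := hocc j (by omega)
        have hocci := hocc i (by omega)
        have hoccj1 := hocc (j + 1) (by omega)
        have hxseg : x = (w.drop (q j)).take (q (j + 1) - q j) := rfl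
        have hxtake : x.take t = p := by
          rw [hxseg, List.take_take]
          have hmin : min t (q (j + 1) - q j) = t := by omega
          rw [hmin]
          exact hoccj.2
        -- ordering of positions
        have hAB : q i ≤ q (i + 1) := hmono (Nat.le_succ i)
        have hBC : q (i + 1) ≤ q j := hmono hij
        have hCD : q j ≤ q (j + 1) := hmono (Nat.le_succ j)
        -- the three pieces
        refine ⟨x, (w.drop (q (i + 1))).take (q j - q (i + 1)), x ++ p, ?_, ?_⟩
        · -- infix
          have hpseg : p = (w.drop (q (j + 1))).take ((q (j + 1) + t) - q (j + 1)) := by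
            rw [Nat.add_sub_cancel_left]
            exact hoccj1.2.symm
          have hxsegi : x = (w.drop (q i)).take (q (i + 1) - q i) := by rw [hxfi]
          have e1 : (w.drop (q j)).take (q (j + 1) - q j) ++
              (w.drop (q (j + 1))).take ((q (j + 1) + t) - q (j + 1)) =
              (w.drop (q j)).take ((q (j + 1) + t) - q j) :=
            seg_append w hCD (by omega)
          have e2 : (w.drop (q (i + 1))).take (q j - q (i + 1)) ++
              (w.drop (q j)).take ((q (j + 1) + t) - q j) =
              (w.drop (q (i + 1))).take ((q (j + 1) + t) - q (i + 1)) :=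
            seg_append w hBC (by omega)
          have e3 : (w.drop (q i)).take (q (i + 1) - q i) ++
              (w.drop (q (i + 1))).take ((q (j + 1) + t) - q (i + 1)) =
              (w.drop (q i)).take ((q (j + 1) + t) - q i) :=
            seg_append w hAB (by omega)
          have heq : x ++ ((w.drop (q (i + 1))).take (q j - q (i + 1)) ++ (x ++ p)) =
              (w.drop (q i)).take ((q (j + 1) + t) - q i) := by
            calc x ++ ((w.drop (q (i + 1))).take (q j - q (i + 1)) ++ (x ++ p))
                = (w.drop (q i)).take (q (i + 1) - q i) ++
                  ((w.drop (q (i + 1))).take (q j - q (i + 1)) ++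
                   ((w.drop (q j)).take (q (j + 1) - q j) ++
                    (w.drop (q (j + 1))).take ((q (j + 1) + t) - q (j + 1)))) := by
                  rw [← hxsegi, ← hxseg, ← hpseg]
              _ = (w.drop (q i)).take (q (i + 1) - q i) ++
                  ((w.drop (q (i + 1))).take (q j - q (i + 1)) ++
                   (w.drop (q j)).take ((q (j + 1) + t) - q j)) := by rw [e1]
              _ = (w.drop (q i)).take (q (i + 1) - q i) ++
                  (w.drop (q (i + 1))).take ((q (j + 1) + t) - q (i + 1)) := by rw [e2]
              _ = (w.drop (q i)).take ((q (j + 1) + t) - q i) := e3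
          have : x ++ (w.drop (q (i + 1))).take (q j - q (i + 1)) ++ (x ++ p) =
              (w.drop (q i)).take ((q (j + 1) + t) - q i) := by
            rw [List.append_assoc]; exact heq
          rw [this]
          exact seg_infix w _ _
        · exact ⟨x, hxne, hxt, by rw [← hxtake, List.append_assoc]⟩
      rcases lt_or_gt_of_ne hij0 with h | h
      · exact main i0 j0 h (by omega) hfij0
      · exact main j0 i0 h (by omega) hfij0.symm

theorem split_t_overlaps_unavoidable (k t : ℕ) (hk : 1 ≤ k) :
    ∃ N : ℕ, ∀ w : List (Fin k), N ≤ w.length → HasSplitTOverlap t w := by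
  classical
  set S : Finset (List (Fin k)) := (List.finite_length_le (Fin k) t).toFinset with hS
  obtain ⟨N, -, hN⟩ := key_lemma k t S.card
  refine ⟨N, fun w hw => hN w S le_rfl (fun i hi => ?_) hw⟩
  rw [hS, Set.Finite.mem_toFinset]
  exact List.length_take_le t _
end

section
/- Let A_k(n,p) denote the number of words of length n over a k-letter alphabet whose smallest period is exactly p, and let ψ_k(p) denote the number of primitive words of length p over the same alphabet. Then A_k(n,p) = ψ_k(p) for all p with 1 ≤ p ≤ n/2 + 1 (equivalently, 2p ≤ n + 2). -/
section PeriodLemmas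

variable {β : Type*} (f : ℕ → β)

/-- `f` has period `q` on `[0, n)`. -/
def POn (q n : ℕ) : Prop := ∀ i, i + q < n → f i = f (i + q)

variable {f}

lemma POn.mono {q n m : ℕ} (h : POn f q n) (hmn : m ≤ n) : POn f q m :=
  fun i hi => h i (lt_of_lt_of_le hi hmn)

lemma POn.chain {g m : ℕ} (h : POn f g m) : ∀ (t a : ℕ), a + t * g < m → f a = f (a + t * g) := by
  intro t
  induction t with
  | zero => simp
  | succ t ih =>
    intro a ha
    have he : (t + 1) * g = t * g + g := by ring
    rw [he] at ha ⊢
    calc f a = f (a + g) := h a (by omega)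
    _ = f (a + g + t * g) := ih (a + g) (by omega)
    _ = f (a + (t * g + g)) := by ring_nf

lemma POn.reduceMod {p n : ℕ} (h : POn f p n) (hp : 0 < p) : ∀ i < n, f i = f (i % p) := by
  intro i hi
  have := (h.chain (i / p) (i % p) (by rw [Nat.mod_add_div']; exact hi)).symm
  rwa [Nat.mod_add_div'] at this

/-- Extension lemma: period `g` on a long-enough prefix plus period `q` (multiple of `g`)
on the whole range gives period `g` on the whole range. -/
lemma POn.ext_lemma {g q m n : ℕ} (hg : 0 < g) (hq0 : 0 < q) (hgq : g ∣ q) (hqm : q ≤ m)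
    (hq : POn f q n) (hgm : POn f g m) : POn f g n := by
  have hgle : g ≤ q := Nat.le_of_dvd hq0 hgq
  intro i
  induction i using Nat.strong_induction_on with
  | _ i ih =>
    intro hin
    by_cases him : i + g < m
    · exact hgm i him
    · by_cases hiq : q ≤ i
      · have e1 : f (i - q) = f i := by
          have := hq (i - q) (by omega)
          rwa [Nat.sub_add_cancel hiq] at this
        have e2 : f (i - q + g) = f (i + g) := by
          have := hq (i - q + g) (by omega)
          have e : i - q + g + q = i + g := by omega
          rwa [e] at this
        have := ih (i - q) (by omega) (by omega)
        rw [← e1, ← e2]; exact this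
      · push_neg at hiq
        have hq_le : q ≤ i + g := by omega
        have e2 : f (i + g - q) = f (i + g) := by
          have := hq (i + g - q) (by omega)
          rwa [Nat.sub_add_cancel hq_le] at this
        obtain ⟨s, hs⟩ := hgq
        have h1 : s * g = q := by rw [hs, Nat.mul_comm]
        have e3 : (s - 1) * g = q - g := by rw [Nat.sub_mul, one_mul, h1]
        have e1 : f (i + g - q) = f i := by
          have := hgm.chain (s - 1) (i + g - q) (by rw [e3]; omega)
          have harg : i + g - q + (s - 1) * g = i := by rw [e3]; omega
          rwa [harg] at this
        rw [← e1, e2]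

lemma POn.sub_period {p q n : ℕ} (hp : POn f p n) (hq : POn f q n) (hqp : q ≤ p) :
    POn f (p - q) (n - q) := by
  intro i hi
  have h1 : i + p < n := by omega
  have := hp i h1
  have h2 := hq (i + (p - q)) (by omega)
  rw [this]
  have e : i + (p - q) + q = i + p := by omega
  rw [e] at h2
  exact h2.symm

/-- Fine–Wilf theorem. -/
lemma fine_wilf : ∀ s p q n : ℕ, p + q = s → 0 < p → 0 < q →
    POn f p n → POn f q n → p + q ≤ n + Nat.gcd p q → POn f (Nat.gcd p q) n := by
  intro s
  induction s using Nat.strong_induction_on with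
  | _ s ih =>
    intro p q n hs hp hq hpn hqn hbound
    rcases le_total q p with hqp | hpq
    · by_cases hdvd : q ∣ p
      · rw [Nat.gcd_eq_right hdvd]; exact hqn
      · have hq_lt : q < p := lt_of_le_of_ne hqp (by rintro rfl; exact hdvd dvd_rfl)
        have hsub : POn f (p - q) (n - q) := hpn.sub_period hqn hqp
        have hqsub : POn f q (n - q) := hqn.mono (Nat.sub_le n q)
        have hgcd_eq : Nat.gcd (p - q) q = Nat.gcd p q := Nat.gcd_sub_self_left hqp
        have hgle : Nat.gcd p q ≤ p - q := by
          rw [← hgcd_eq]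
          exact Nat.le_of_dvd (by omega) (Nat.gcd_dvd_left _ _)
        have hg1 : 0 < Nat.gcd p q := Nat.gcd_pos_of_pos_left _ hp
        have hbound' : (p - q) + q ≤ (n - q) + Nat.gcd (p - q) q := by
          rw [hgcd_eq]; omega
        have hIH : POn f (Nat.gcd (p - q) q) (n - q) :=
          ih ((p - q) + q) (by omega) (p - q) q (n - q) rfl (by omega) hq hsub hqsub hbound'
        rw [hgcd_eq] at hIH
        exact POn.ext_lemma hg1 hq (Nat.gcd_dvd_right p q) (by omega) hqn hIH
    · by_cases hdvd : p ∣ q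
      · rw [Nat.gcd_eq_left hdvd]; exact hpn
      · have hp_lt : p < q := lt_of_le_of_ne hpq (by rintro rfl; exact hdvd dvd_rfl)
        have hsub : POn f (q - p) (n - p) := hqn.sub_period hpn hpq
        have hpsub : POn f p (n - p) := hpn.mono (Nat.sub_le n p)
        have hgcd_eq : Nat.gcd (q - p) p = Nat.gcd p q := by
          rw [Nat.gcd_sub_self_left hpq, Nat.gcd_comm]
        have hgle : Nat.gcd p q ≤ q - p := by
          rw [← hgcd_eq]
          exact Nat.le_of_dvd (by omega) (Nat.gcd_dvd_left _ _)
        have hg1 : 0 < Nat.gcd p q := Nat.gcd_pos_of_pos_left _ hp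
        have hbound' : (q - p) + p ≤ (n - p) + Nat.gcd (q - p) p := by
          rw [hgcd_eq]; omega
        have hIH : POn f (Nat.gcd (q - p) p) (n - p) :=
          ih ((q - p) + p) (by omega) (q - p) p (n - p) rfl (by omega) hp hsub hpsub hbound'
        rw [hgcd_eq] at hIH
        exact POn.ext_lemma hg1 hp (Nat.gcd_dvd_left p q) (by omega) hpn hIH

end PeriodLemmas

section ListLemmas

variable {α : Type*}

lemma hasPeriod_iff {w : List α} {q : ℕ} :
    HasPeriod w q ↔ 1 ≤ q ∧ POn (fun i => w[i]?) q w.length := by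
  constructor
  · rintro ⟨h1, h2⟩
    refine ⟨h1, fun i hi => ?_⟩
    have := h2 i hi
    simp only [List.get_eq_getElem] at this
    show w[i]? = w[i + q]?
    rw [List.getElem?_eq_getElem (show i < w.length by omega), List.getElem?_eq_getElem hi, this]
  · rintro ⟨h1, h2⟩
    refine ⟨h1, fun i hi => ?_⟩
    have this : w[i]? = w[i + q]? := h2 i hi
    rw [List.getElem?_eq_getElem (show i < w.length by omega), List.getElem?_eq_getElem hi] at this
    simp only [List.get_eq_getElem]
    exact Option.some.inj this

lemma minPeriod_eq_iff {w : List α} {p : ℕ} (hp : 1 ≤ p) :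
    minPeriod w = p ↔ HasPeriod w p ∧ ∀ q, HasPeriod w q → p ≤ q := by
  constructor
  · intro h
    rw [minPeriod] at h
    have hne : {q | HasPeriod w q}.Nonempty := by
      by_contra hne
      rw [Set.not_nonempty_iff_eq_empty] at hne
      rw [hne, Nat.sInf_empty] at h
      omega
    have hmem := Nat.sInf_mem hne
    rw [h] at hmem
    exact ⟨hmem, fun q hq => h ▸ Nat.sInf_le hq⟩
  · rintro ⟨h1, h2⟩
    exact le_antisymm (Nat.sInf_le h1) (le_csInf ⟨p, h1⟩ h2)

lemma prefix_getElem? {v w : List α} (h : v <+: w) {i : ℕ} (hi : i < v.length) :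
    v[i]? = w[i]? := by
  obtain ⟨t, rfl⟩ := h
  exact (List.getElem?_append_left hi).symm

lemma length_join_replicate (m : ℕ) (x : List α) :
    ((List.replicate m x).flatten).length = m * x.length := by
  simp [List.length_flatten, List.map_replicate, List.sum_replicate, smul_eq_mul]

lemma join_replicate_succ (m : ℕ) (x : List α) :
    (List.replicate (m + 1) x).flatten = x ++ (List.replicate m x).flatten := by
  simp [List.replicate_succ]

lemma join_replicate_succ' (m : ℕ) (x : List α) :
    (List.replicate (m + 1) x).flatten = (List.replicate m x).flatten ++ x := by
  rw [List.replicate_succ']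
  simp

lemma pow_period (m : ℕ) (x : List α) :
    POn (fun i => ((List.replicate m x).flatten)[i]?) x.length ((List.replicate m x).flatten).length := by
  cases m with
  | zero => intro i hi; simp at hi
  | succ m =>
    intro i hi
    have hw : (List.replicate (m + 1) x).flatten = x ++ (List.replicate m x).flatten :=
      join_replicate_succ m x
    have hpre : (List.replicate m x).flatten <+: (List.replicate (m + 1) x).flatten := by
      rw [join_replicate_succ']
      exact List.prefix_append _ _
    have hlen : ((List.replicate (m + 1) x).flatten).length = (m + 1) * x.length :=
      length_join_replicate _ _
    have hlenu : ((List.replicate m x).flatten).length = m * x.length :=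
      length_join_replicate _ _
    have hi' : i < ((List.replicate m x).flatten).length := by
      rw [hlenu]
      rw [hlen] at hi
      have : (m + 1) * x.length = m * x.length + x.length := by ring
      omega
    have e2 := List.getElem?_append_right
      (l₁ := x) (l₂ := (List.replicate m x).flatten) (i := i + x.length) (by omega)
    calc ((List.replicate (m + 1) x).flatten)[i]?
        = ((List.replicate m x).flatten)[i]? := (prefix_getElem? hpre hi').symm
      _ = ((List.replicate (m + 1) x).flatten)[i + x.length]? := by
          rw [hw, e2]
          congr 1
          omega

lemma eq_pow {w : List α} {g : ℕ} (hg : 0 < g) (hgL : g ≤ w.length) (hdvd : g ∣ w.length)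
    (hper : POn (fun i => w[i]?) g w.length) :
    w = (List.replicate (w.length / g) (w.take g)).flatten := by
  have hL0 : 0 < w.length := by omega
  have htl : (w.take g).length = g := by rw [List.length_take]; omega
  have hulen : ((List.replicate (w.length / g) (w.take g)).flatten).length = w.length := by
    rw [length_join_replicate, htl]
    exact Nat.div_mul_cancel hdvd
  have hm1 : 1 ≤ w.length / g := (Nat.one_le_div_iff hg).mpr hgL
  have hpre : w.take g <+: (List.replicate (w.length / g) (w.take g)).flatten := by
    obtain ⟨m', hm'⟩ : ∃ m', w.length / g = m' + 1 := ⟨w.length / g - 1, by omega⟩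
    rw [hm', join_replicate_succ]
    exact List.prefix_append _ _
  apply List.ext_getElem?
  intro i
  by_cases hi : i < w.length
  · have h1 : w[i]? = w[i % g]? := hper.reduceMod hg i hi
    have hP := pow_period (w.length / g) (w.take g)
    rw [htl] at hP
    have h2 : ((List.replicate (w.length / g) (w.take g)).flatten)[i]?
        = ((List.replicate (w.length / g) (w.take g)).flatten)[i % g]? := by
      have := hP.reduceMod hg i (by rw [hulen]; exact hi)
      exact this
    have himod : i % g < g := Nat.mod_lt _ hg
    have h3 : ((List.replicate (w.length / g) (w.take g)).flatten)[i % g]?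
        = (w.take g)[i % g]? := (prefix_getElem? hpre (by rw [htl]; exact himod)).symm
    have h4 : (w.take g)[i % g]? = w[i % g]? := by
      rw [List.getElem?_take, if_pos himod]
    rw [h1, h2, h3, h4]
  · rw [List.getElem?_eq_none (by omega), List.getElem?_eq_none (by rw [hulen]; omega)]

end ListLemmas

theorem count_words_with_min_period (k n p : ℕ) (hn : 1 ≤ n) (hp : 1 ≤ p)
    (hpn : 2 * p ≤ n + 2) :
    {w : List (Fin k) | w.length = n ∧ minPeriod w = p}.ncard
      = {w : List (Fin k) | w.length = p ∧ Primitive w}.ncard := by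
  classical
  have hp0 : 0 < p := hp
  have hpn' : p ≤ n := by omega
  have memS : ∀ w : List (Fin k), w.length = n ∧ minPeriod w = p →
      w.length = n ∧ HasPeriod w p ∧ ∀ q, HasPeriod w q → p ≤ q := by
    rintro w ⟨h1, h2⟩
    obtain ⟨h3, h4⟩ := (minPeriod_eq_iff hp).mp h2
    exact ⟨h1, h3, h4⟩
  -- image of take p on the first set equals the second set
  have himg : (fun w : List (Fin k) => w.take p) '' {w | w.length = n ∧ minPeriod w = p}
      = {w | w.length = p ∧ Primitive w} := by
    apply Set.Subset.antisymm
    · rintro _ ⟨w, hw, rfl⟩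
      obtain ⟨hlen, hper, hmin⟩ := memS w hw
      have htlen : (w.take p).length = p := by rw [List.length_take]; omega
      show (w.take p).length = p ∧ Primitive (w.take p)
      refine ⟨htlen, ?_, ?_⟩
      · intro hnil
        rw [hnil] at htlen
        simp at htlen
        omega
      · intro x m hm heq
        have hxlen : p = m * x.length := by
          have := congrArg List.length heq
          rw [htlen, length_join_replicate] at this
          exact this
        have hx0 : 0 < x.length := by
          rcases Nat.eq_zero_or_pos x.length with h | h
          · rw [h, Nat.mul_zero] at hxlen; omega
          · exact h
        have hxlt : x.length < p := by
          have : 2 * x.length ≤ m * x.length := Nat.mul_le_mul_right _ hm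
          omega
        have hjlen : ((List.replicate m x).flatten).length = p := by
          rw [← heq]; exact htlen
        have hP := pow_period m x
        rw [hjlen] at hP
        have hconv : ∀ j, j < p → w[j]? = ((List.replicate m x).flatten)[j]? := by
          intro j hj
          rw [← heq, List.getElem?_take, if_pos hj]
        have hperx : POn (fun i => w[i]?) x.length p := by
          intro i hi
          show w[i]? = w[i + x.length]?
          rw [hconv i (by omega), hconv (i + x.length) hi]
          exact hP i hi
        have hpPn : POn (fun i => w[i]?) p n := by
          obtain ⟨_, h⟩ := hasPeriod_iff.mp hper
          rwa [hlen] at h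
        have hfull : POn (fun i => w[i]?) x.length n :=
          POn.ext_lemma hx0 hp0 ⟨m, by rw [hxlen]; ring⟩ le_rfl hpPn hperx
        have hxper : HasPeriod w x.length := by
          rw [hasPeriod_iff, hlen]
          exact ⟨hx0, hfull⟩
        have := hmin _ hxper
        omega
    · rintro x ⟨hxlen, hxprim⟩
      set w : List (Fin k) := List.ofFn
        (fun i : Fin n => x.get ⟨(i : ℕ) % p, by rw [hxlen]; exact Nat.mod_lt _ hp0⟩) with hw
      have hwlen : w.length = n := by rw [hw]; exact List.length_ofFn
      have hwget : ∀ i, i < n → w[i]? = x[i % p]? := by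
        intro i hi
        have hiw : i < w.length := by omega
        have himp : i % p < x.length := by rw [hxlen]; exact Nat.mod_lt _ hp0
        rw [List.getElem?_eq_getElem hiw, List.getElem?_eq_getElem himp]
        congr 1
        simp [hw, List.getElem_ofFn, List.get_eq_getElem]
      have htake : w.take p = x := by
        apply List.ext_getElem?
        intro i
        by_cases hi : i < p
        · rw [List.getElem?_take, if_pos hi, hwget i (by omega), Nat.mod_eq_of_lt hi]
        · rw [List.getElem?_take, if_neg hi, eq_comm, List.getElem?_eq_none (by omega)]
      have hperiod : HasPeriod w p := by
        rw [hasPeriod_iff, hwlen]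
        refine ⟨hp, fun i hi => ?_⟩
        show w[i]? = w[i + p]?
        rw [hwget i (by omega), hwget (i + p) hi, Nat.add_mod_right]
      have hmin : ∀ q, HasPeriod w q → p ≤ q := by
        intro q hq
        by_contra hlt
        push_neg at hlt
        have hq1 : 1 ≤ q := hq.1
        obtain ⟨_, hqP⟩ := hasPeriod_iff.mp hq
        obtain ⟨_, hpP⟩ := hasPeriod_iff.mp hperiod
        rw [hwlen] at hqP hpP
        have hg0 : 0 < Nat.gcd p q := Nat.gcd_pos_of_pos_left _ hp0
        have hbound : p + q ≤ n + Nat.gcd p q := by omega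
        have hg := fine_wilf (p + q) p q n rfl hp0 (by omega) hpP hqP hbound
        have hglt : Nat.gcd p q < p := lt_of_le_of_lt (Nat.gcd_le_right _ (by omega)) hlt
        have hgdvd : Nat.gcd p q ∣ p := Nat.gcd_dvd_left _ _
        have hperx : POn (fun i => x[i]?) (Nat.gcd p q) p := by
          intro i hi
          have e : ∀ j, j < p → x[j]? = w[j]? := by
            intro j hj
            rw [← htake, List.getElem?_take, if_pos hj]
          show x[i]? = x[i + Nat.gcd p q]?
          rw [e i (by omega), e (i + Nat.gcd p q) hi]
          exact hg i (by omega)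
        have heq := eq_pow (w := x) hg0 (by rw [hxlen]; omega)
          (by rw [hxlen]; exact hgdvd) (by rw [hxlen]; exact hperx)
        rw [hxlen] at heq
        have h2 : 2 ≤ p / Nat.gcd p q := by
          obtain ⟨s, hs⟩ := hgdvd
          have hs2 : 2 ≤ s := by
            by_contra hcon
            push_neg at hcon
            interval_cases s
            · simp at hs; omega
            · simp at hs; omega
          have hs' : p = s * Nat.gcd p q := by rw [Nat.mul_comm]; exact hs
          have hdiv : p / Nat.gcd p q = s := Nat.div_eq_of_eq_mul_left hg0 hs'
          omega
        exact hxprim.2 (x.take (Nat.gcd p q)) (p / Nat.gcd p q) h2 heq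
      exact ⟨w, ⟨hwlen, (minPeriod_eq_iff hp).mpr ⟨hperiod, hmin⟩⟩, htake⟩
  have hinj : Set.InjOn (fun w : List (Fin k) => w.take p)
      {w | w.length = n ∧ minPeriod w = p} := by
    intro w hw z hz htk
    obtain ⟨hwlen, hwper, _⟩ := memS w hw
    obtain ⟨hzlen, hzper, _⟩ := memS z hz
    obtain ⟨_, hwP⟩ := hasPeriod_iff.mp hwper
    obtain ⟨_, hzP⟩ := hasPeriod_iff.mp hzper
    rw [hwlen] at hwP
    rw [hzlen] at hzP
    simp only at htk
    apply List.ext_getElem?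
    intro i
    by_cases hi : i < n
    · have himp : i % p < p := Nat.mod_lt _ hp0
      have e1 : w[i]? = w[i % p]? := hwP.reduceMod hp0 i hi
      have e2 : z[i]? = z[i % p]? := hzP.reduceMod hp0 i hi
      have e3 : w[i % p]? = (w.take p)[i % p]? := by
        rw [List.getElem?_take, if_pos himp]
      have e4 : z[i % p]? = (z.take p)[i % p]? := by
        rw [List.getElem?_take, if_pos himp]
      rw [e1, e3, htk, ← e4, ← e2]
    · rw [List.getElem?_eq_none (by omega), List.getElem?_eq_none (by omega)]
  calc {w : List (Fin k) | w.length = n ∧ minPeriod w = p}.ncard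
      = ((fun w : List (Fin k) => w.take p) ''
          {w | w.length = n ∧ minPeriod w = p}).ncard := (Set.ncard_image_of_injOn hinj).symm
    _ = {w : List (Fin k) | w.length = p ∧ Primitive w}.ncard := by rw [himg]
end

section
/- Let x be a word of length n ≥ 1 and let w be a word containing m occurrences of x but no two disjoint occurrences of x. Then m ≤ ⌈n / per(x)⌉. -/
lemma occurs_getElem {α : Type*} {x w : List α} {i : ℕ} (h : Occurs x w i)
    (hlen : i + x.length ≤ w.length)
    (k : ℕ) (hk : k < x.length) : x[k] = w[i + k]'(by omega) := by
  have h1 : x[k] = (w.drop i)[k]'(by simp; omega) := List.IsPrefix.getElem h hk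
  rw [h1, List.getElem_drop]

lemma occurs_len {α : Type*} {x w : List α} {i : ℕ} (hx : x ≠ []) (h : Occurs x w i) :
    i + x.length ≤ w.length := by
  have := h.length_le
  simp at this
  have hxl : 0 < x.length := List.length_pos_iff.mpr hx
  omega

theorem occurrences_bound_of_no_disjoint {α : Type*} (x w : List α) (n m : ℕ)
    (hn : x.length = n) (h1 : 1 ≤ n)
    (hm : {i : ℕ | Occurs x w i}.ncard = m)
    (hnd : ¬ TwoDisjointOccs x w) :
    m ≤ (n + minPeriod x - 1) / minPeriod x := by
  set S : Set ℕ := {i : ℕ | Occurs x w i} with hS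
  have hx : x ≠ [] := by intro h; simp [h] at hn; omega
  -- finiteness
  have hsub : S ⊆ Set.Iio w.length := by
    intro i hi
    have := occurs_len hx hi
    simp only [Set.mem_Iio]; omega
  have hfin : S.Finite := (Set.finite_Iio _).subset hsub
  set p := minPeriod x with hp
  -- n is a period
  have hpn : HasPeriod x n := by
    refine ⟨h1, fun i h => ?_⟩
    rw [hn] at h; omega
  have hne : Set.Nonempty {q | HasPeriod x q} := ⟨n, hpn⟩
  have hpmem : HasPeriod x p := Nat.sInf_mem hne
  have hp1 : 1 ≤ p := hpmem.1
  -- any two occurrences differ by at least p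
  have key : ∀ i j, i ∈ S → j ∈ S → i < j → p ≤ j - i := by
    intro i j hi hj hij
    have hjlt : j < i + n := by
      by_contra hcon
      exact hnd ⟨i, j, hi, hj, by omega⟩
    have hper : HasPeriod x (j - i) := by
      refine ⟨by omega, fun k hk => ?_⟩
      have hki : i + x.length ≤ w.length := occurs_len hx hi
      have hkj : j + x.length ≤ w.length := occurs_len hx hj
      have e1 : x[k]'(by omega) = w[j + k]'(by omega) := occurs_getElem hj hkj k (by omega)
      have e2 : x[k + (j - i)]'(hk) = w[i + (k + (j - i))]'(by omega) :=
        occurs_getElem hi hki (k + (j - i)) hk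
      have : i + (k + (j - i)) = j + k := by omega
      simp only [List.get_eq_getElem]
      rw [e1, e2]
      congr 1
      omega
    exact Nat.sInf_le hper
  -- map to quotients
  by_cases hm0 : m = 0
  · exact hm0 ▸ Nat.zero_le _
  have hSne : S.Nonempty := by
    rw [Set.nonempty_iff_ne_empty]
    intro h; rw [h] at hm; simp at hm; omega
  set i0 := sInf S with hi0def
  have hi0 : i0 ∈ S := Nat.sInf_mem hSne
  have hmin' : ∀ j ∈ S, i0 ≤ j := fun j hj => Nat.sInf_le hj
  have hinj : Set.InjOn (fun i => (i - i0) / p) S := by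
    intro a ha b hb hab
    by_contra hne
    rcases Nat.lt_or_ge a b with h | h
    · have hpd := key a b ha hb h
      have ha0 := hmin' a ha
      have : (b - i0) / p ≥ (a - i0) / p + 1 := by
        calc (a - i0) / p + 1 = (a - i0 + p) / p := (Nat.add_div_right _ (by omega)).symm
        _ ≤ (b - i0) / p := Nat.div_le_div_right (by omega)
      simp only at hab; omega
    · have hba : b < a := by omega
      have hpd := key b a hb ha hba
      have hb0 := hmin' b hb
      have : (a - i0) / p ≥ (b - i0) / p + 1 := by
        calc (b - i0) / p + 1 = (b - i0 + p) / p := (Nat.add_div_right _ (by omega)).symm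
        _ ≤ (a - i0) / p := Nat.div_le_div_right (by omega)
      simp only at hab; omega
  have himg : (fun i => (i - i0) / p) '' S ⊆ Set.Iio ((n - 1) / p + 1) := by
    rintro _ ⟨a, ha, rfl⟩
    simp only [Set.mem_Iio]
    have haub : a < i0 + n := by
      by_contra hcon
      exact hnd ⟨i0, a, hi0, ha, by omega⟩
    have : a - i0 ≤ n - 1 := by omega
    have := Nat.div_le_div_right (c := p) this
    omega
  have hcard : S.ncard = ((fun i => (i - i0) / p) '' S).ncard :=
    (Set.ncard_image_of_injOn hinj).symm
  have hle : ((fun i => (i - i0) / p) '' S).ncard ≤ (Set.Iio ((n - 1) / p + 1)).ncard :=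
    Set.ncard_le_ncard himg (Set.finite_Iio _)
  have hIio : (Set.Iio ((n - 1) / p + 1)).ncard = (n - 1) / p + 1 := by
    simp [Set.ncard_eq_toFinset_card']
  have hfinal : (n - 1) / p + 1 = (n + p - 1) / p := by
    rw [show n + p - 1 = (n - 1) + p by omega, Nat.add_div_right _ (by omega)]
  omega
end

section
/- For every word x of length n ≥ 1, there exists a word w that contains at least ⌈n / per(x)⌉ occurrences of x but no two disjoint occurrences of x; that is, the upper bound ⌈n / per(x)⌉ on the number of pairwise non-disjoint occurrences is achievable for each x. -/
theorem occurrences_bound_achievable {α : Type*} (x : List α) (h1 : 1 ≤ x.length) :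
    ∃ w : List α,
      (x.length + minPeriod x - 1) / minPeriod x ≤ {i : ℕ | Occurs x w i}.ncard ∧
      ¬ TwoDisjointOccs x w := by
  classical
  set n := x.length with hn
  have htriv : HasPeriod x n := ⟨h1, fun i h => absurd h (by omega)⟩
  set p := minPeriod x with hpdef
  have hne : {q | HasPeriod x q}.Nonempty := ⟨n, htriv⟩
  have hmem : HasPeriod x p := Nat.sInf_mem hne
  obtain ⟨hp1, hper⟩ := hmem
  have hpn : p ≤ n := Nat.sInf_le htriv
  have hper' : ∀ (i : ℕ) (h : p + i < x.length), x[p + i] = x[i] := by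
    intro i h
    have h2 : i + p < x.length := by omega
    have h3 := (hper i h2).symm
    simp only [List.get_eq_getElem] at h3
    convert h3 using 2
    omega
  have hdrop : x.drop p = x.take (n - p) := by
    apply List.ext_getElem
    · simp; omega
    · intro i hi1 hi2
      simp only [List.getElem_drop, List.getElem_take]
      have hi : p + i < x.length := by simp at hi1; omega
      exact hper' i hi
  set u := x.take p with hu
  have hul : u.length = p := by rw [hu, List.length_take]; omega
  have hpref : x <+: u ++ x := by
    refine ⟨x.drop (n - p), ?_⟩
    calc x ++ x.drop (n - p) = (x.take p ++ x.drop p) ++ x.drop (n - p) := by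
          rw [List.take_append_drop]
      _ = u ++ (x.take (n - p) ++ x.drop (n - p)) := by
          rw [hdrop, List.append_assoc]
      _ = u ++ x := by rw [List.take_append_drop]
  have key : ∀ m, x <+: (List.replicate m u).flatten ++ x := by
    intro m
    induction m with
    | zero => simp
    | succ m ih =>
      obtain ⟨t, ht⟩ := ih
      have heq : (List.replicate (m + 1) u).flatten ++ x = (u ++ x) ++ t := by
        rw [List.replicate_succ, List.flatten_cons, List.append_assoc, ← ht]
        simp
      rw [heq]
      exact hpref.trans ((u ++ x).prefix_append t)
  set k := (n + p - 1) / p with hk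
  have hk1 : k - 1 = (n - 1) / p := by
    rw [hk, show n + p - 1 = (n - 1) + p by omega, Nat.add_div_right _ hp1]
    simp
  have hkp : (k - 1) * p < n := by
    rw [hk1]
    exact lt_of_le_of_lt (Nat.div_mul_le_self (n - 1) p) (by omega)
  set w := (List.replicate (k - 1) u).flatten ++ x with hw
  have hjl : ∀ m : ℕ, ((List.replicate m u).flatten).length = m * p := by
    intro m; simp [hul]
  have hwlen : w.length = (k - 1) * p + n := by
    simp [hw, hjl]; omega
  have hocc : ∀ m < k, Occurs x w (m * p) := by
    intro m hm
    unfold Occurs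
    have h5 : List.replicate (k - 1) u = List.replicate m u ++ List.replicate (k - 1 - m) u := by
      rw [← List.replicate_add]; congr 1; omega
    have hsplit : w = (List.replicate m u).flatten
        ++ ((List.replicate (k - 1 - m) u).flatten ++ x) := by
      rw [hw, h5, List.flatten_append, List.append_assoc]
    rw [hsplit, List.drop_left' (hjl m)]
    exact key _
  have hfin : {i : ℕ | Occurs x w i}.Finite := by
    apply Set.Finite.subset (Set.finite_Iic w.length)
    intro i hi
    have := hi.length_le
    rw [List.length_drop] at this
    simp only [Set.mem_Iic]
    omega
  have hsub : (((Finset.range k).image (· * p) : Finset ℕ) : Set ℕ) ⊆ {i : ℕ | Occurs x w i} := by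
    intro i hi
    simp only [Finset.coe_image, Finset.coe_range, Set.mem_image, Set.mem_Iio] at hi
    obtain ⟨m, hm, rfl⟩ := hi
    exact hocc m hm
  refine ⟨w, ?_, ?_⟩
  · calc (n + p - 1) / p = k := rfl
      _ = ((Finset.range k).image (· * p)).card := by
          rw [Finset.card_image_of_injective _ (fun a b h =>
            Nat.eq_of_mul_eq_mul_right hp1 h), Finset.card_range]
      _ = (((Finset.range k).image (· * p) : Finset ℕ) : Set ℕ).ncard := by
          rw [Set.ncard_coe_finset]
      _ ≤ _ := Set.ncard_le_ncard hsub hfin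
  · rintro ⟨i, j, hi, hj, hij⟩
    have hjl' := hj.length_le
    rw [List.length_drop] at hjl'
    omega
end

section
/- For every integer k ≥ 1, the maximum length of a word over a k-letter alphabet containing no two disjoint occurrences of a same length-2 factor is k^2 + k + 1; that is, there exists a word of length k^2 + k + 1 over a k-letter alphabet with no two disjoint occurrences of any length-2 word, and every word of length at least k^2 + k + 2 over a k-letter alphabet contains two disjoint occurrences of some length-2 word. -/
/-- Letter at position `i` of the optimal word over alphabet `{0,...,k-1}`. -/
def ff : ℕ → ℕ → ℕ
  | 0, _ => 0
  | 1, _ => 0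
  | k+2, i =>
      if i = 0 then 0
      else if i < 2*k+4 then (if i % 2 = 1 then k+1 else k+1 - (i-2)/2)
      else ff (k+1) (i - (2*k+4))

lemma ff_lt : ∀ k i, ff (k+1) i ≤ k := by
  intro k
  induction k with
  | zero => intro i; simp [ff]
  | succ k ih =>
    intro i
    rw [ff]
    split_ifs with h1 h2 h3 <;> first | omega | exact le_trans (ih _) (by omega)

lemma ff_zero : ∀ k, ff k 0 = 0 := by
  intro k; match k with
  | 0 => rfl
  | 1 => rfl
  | k+2 => rw [ff]; simp

lemma ff_new (k i : ℕ) (h : i ≤ 2*k+4) :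
    ff (k+2) i = if i = 0 then 0 else if i % 2 = 1 then k+1 else k+1 - (i-2)/2 := by
  rcases Nat.lt_or_ge i (2*k+4) with h' | h'
  · rw [ff]; simp [h']
  · have hi : i = 2*k+4 := by omega
    subst hi
    rw [ff]
    rw [if_neg (by omega), if_neg (by omega), if_neg (by omega), if_neg (by omega)]
    simp only [Nat.sub_self, ff_zero]
    omega

lemma ff_old (k i : ℕ) (h : 2*k+4 ≤ i) :
    ff (k+2) i = ff (k+1) (i - (2*k+4)) := by
  rcases Nat.eq_or_lt_of_le h with h'' | h''
  · rw [ff]; simp [← h'', ff_zero]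
  · rw [ff]; rw [if_neg (by omega), if_neg (by omega)]

/-- Key lemma: in the word over alphabet size k+1, equal pairs imply adjacency. -/
lemma key : ∀ k, ∀ i j : ℕ, i + 2 ≤ j → j ≤ k*k + 3*k + 1 →
    ff (k+1) i = ff (k+1) j → ff (k+1) (i+1) = ff (k+1) (j+1) → False := by
  intro k
  induction k with
  | zero => intro i j h1 h2 _ _; omega
  | succ k ih =>
    intro i j h1 h2 e1 e2
    have hr : k+1+1 = k+2 := rfl
    rw [hr] at e1 e2
    have hsq : (k+1)*(k+1) = k*k + 2*k + 1 := by ring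
    rcases Nat.lt_or_ge i (2*k+4) with hi | hi
    · rcases Nat.lt_or_ge j (2*k+4) with hj | hj
      · -- both in new region
        rw [ff_new k i (by omega), ff_new k j (by omega)] at e1
        rw [ff_new k (i+1) (by omega), ff_new k (j+1) (by omega)] at e2
        split_ifs at e1 e2 <;> first | contradiction | omega
      · -- i in new region, j in old region
        have hj1 : ff (k+2) j ≤ k := by rw [ff_old k j hj]; exact ff_lt k _
        have hj2 : ff (k+2) (j+1) ≤ k := by rw [ff_old k (j+1) (by omega)]; exact ff_lt k _
        rw [ff_new k i (by omega)] at e1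
        rw [ff_new k (i+1) (by omega)] at e2
        split_ifs at e1 e2 <;> first | contradiction | omega
    · -- both in old region
      have hj : 2*k+4 ≤ j := by omega
      rw [ff_old k i hi, ff_old k j hj] at e1
      rw [ff_old k (i+1) (by omega), ff_old k (j+1) (by omega)] at e2
      have r1 : i + 1 - (2*k+4) = (i - (2*k+4)) + 1 := by omega
      have r2 : j + 1 - (2*k+4) = (j - (2*k+4)) + 1 := by omega
      rw [r1, r2] at e2
      exact ih (i - (2*k+4)) (j - (2*k+4)) (by omega) (by omega) e1 e2

lemma occurs_pair_iff {α : Type*} {w : List α} {a b : α} {i : ℕ} :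
    Occurs [a,b] w i ↔ w[i]? = some a ∧ w[i+1]? = some b := by
  constructor
  · rintro ⟨t, ht⟩
    have h0 : (w.drop i)[0]? = some a := by rw [← ht]; simp
    have h1 : (w.drop i)[1]? = some b := by rw [← ht]; simp
    rw [List.getElem?_drop] at h0 h1
    simpa using ⟨h0, h1⟩
  · rintro ⟨h0, h1⟩
    have hl1 : i + 1 < w.length := (List.getElem?_eq_some_iff.mp h1).1
    have hl0 : i < w.length := by omega
    have e0 : w[i] = a := by simpa [List.getElem?_eq_some_iff, hl0] using h0
    have e1 : w[i+1] = b := by simpa [List.getElem?_eq_some_iff, hl1] using h1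
    refine ⟨w.drop (i+2), ?_⟩
    rw [List.drop_eq_getElem_cons hl0, List.drop_eq_getElem_cons hl1, e0, e1]
    rfl

theorem C_k_two (k : ℕ) (hk : 1 ≤ k) :
    (∃ w : List (Fin k), w.length = k ^ 2 + k + 1 ∧
      ∀ x : List (Fin k), x.length = 2 → ¬ TwoDisjointOccs x w) ∧
    (∀ w : List (Fin k), k ^ 2 + k + 2 ≤ w.length →
      ∃ x : List (Fin k), x.length = 2 ∧ TwoDisjointOccs x w) := by
  constructor
  · obtain ⟨m, rfl⟩ : ∃ m, k = m + 1 := ⟨k - 1, by omega⟩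
    set L := (m+1)^2 + (m+1) + 1 with hL
    refine ⟨List.ofFn (fun i : Fin L => (⟨ff (m+1) i.1, by have := ff_lt m i.1; omega⟩ : Fin (m+1))),
      by simp; omega, ?_⟩
    intro x hx
    obtain ⟨a, b, rfl⟩ := List.length_eq_two.mp hx
    rintro ⟨i, j, oi, oj, hd⟩
    rw [occurs_pair_iff] at oi oj
    simp only [List.getElem?_ofFn, List.ofFnNthVal] at oi oj
    obtain ⟨oj1, oj2⟩ := oj
    obtain ⟨oi1, oi2⟩ := oi
    have hij : i + 2 ≤ j := by simpa using hd
    have hj1 : j + 1 < L := by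
      by_contra h
      rw [dif_neg h] at oj2
      cases oj2
    rw [dif_pos hj1] at oj2
    rw [dif_pos (show j < L by omega)] at oj1
    rw [dif_pos (show i < L by omega)] at oi1
    rw [dif_pos (show i + 1 < L by omega)] at oi2
    have t1 := congrArg Fin.val (Option.some.inj oi1)
    have t2 := congrArg Fin.val (Option.some.inj oj1)
    have t3 := congrArg Fin.val (Option.some.inj oi2)
    have t4 := congrArg Fin.val (Option.some.inj oj2)
    simp only [] at t1 t2 t3 t4
    have hsq : (m+1)*(m+1) = m*m + 2*m + 1 := by ring
    have hpw : (m+1)^2 = (m+1)*(m+1) := pow_two _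
    exact key m i j hij (by omega) (by rw [t1, t2]) (by rw [t3, t4])
  · intro w hw
    by_contra hcon
    push_neg at hcon
    classical
    set L := w.length with hLdef
    have d : Fin k := ⟨0, hk⟩
    set p : ℕ → Fin k × Fin k := fun i => (w.getD i d, w.getD (i+1) d) with hp
    -- the main step: equal pairs at distance ≥ 2 give two disjoint occurrences
    have step : ∀ i j : ℕ, i + 2 ≤ j → j + 1 < L → p i = p j → False := by
      intro i j hij hjL hpij
      have hiL : i + 1 < L := by omega
      refine hcon [w.getD i d, w.getD (i+1) d] rfl ⟨i, j, ?_, ?_, by simp; omega⟩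
      · rw [occurs_pair_iff]
        constructor <;>
          rw [List.getD_eq_getElem _ _ (by omega), List.getElem?_eq_getElem (by omega)]
      · rw [occurs_pair_iff]
        have e1 : w.getD i d = w.getD j d := congrArg Prod.fst hpij
        have e2 : w.getD (i+1) d = w.getD (j+1) d := congrArg Prod.snd hpij
        rw [e1, e2]
        constructor <;>
          rw [List.getD_eq_getElem _ _ (by omega), List.getElem?_eq_getElem (by omega)]
    -- counting
    set S := Finset.range (L - 1) with hS
    have hcard : S.card = L - 1 := Finset.card_range _
    have hfib := Finset.card_eq_sum_card_fiberwise
      (f := p) (s := S) (t := Finset.univ) (fun x _ => Finset.mem_univ _)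
    have hbound : ∀ v ∈ (Finset.univ : Finset (Fin k × Fin k)),
        (S.filter (fun i => p i = v)).card ≤ if v.1 = v.2 then 2 else 1 := by
      intro v _
      split_ifs with hv
      · by_contra h
        push_neg at h
        obtain ⟨x, hx, y, hy, z, hz, hxy, hxz, hyz⟩ := Finset.two_lt_card.mp h
        simp only [hS, Finset.mem_filter, Finset.mem_range] at hx hy hz
        obtain ⟨hx1, hx2⟩ := hx
        obtain ⟨hy1, hy2⟩ := hy
        obtain ⟨hz1, hz2⟩ := hz
        have hmem : ∀ u v' : ℕ, u ∈ S.filter (fun i => p i = v) → v' ∈ S.filter (fun i => p i = v) →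
            u + 2 ≤ v' → False := by
          intro u v' hu hv' huv
          simp only [hS, Finset.mem_filter, Finset.mem_range] at hu hv'
          obtain ⟨hu1, hu2⟩ := hu
          obtain ⟨hv'1, hv'2⟩ := hv'
          exact step u v' huv (by omega) (hu2.trans hv'2.symm)
        rcases (show x+2 ≤ y ∨ x+2 ≤ z ∨ y+2 ≤ x ∨ y+2 ≤ z ∨ z+2 ≤ x ∨ z+2 ≤ y by omega) with
          h'|h'|h'|h'|h'|h' <;>
          [exact step x y h' (by omega) (hx2.trans hy2.symm);
           exact step x z h' (by omega) (hx2.trans hz2.symm);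
           exact step y x h' (by omega) (hy2.trans hx2.symm);
           exact step y z h' (by omega) (hy2.trans hz2.symm);
           exact step z x h' (by omega) (hz2.trans hx2.symm);
           exact step z y h' (by omega) (hz2.trans hy2.symm)]
      · by_contra h
        push_neg at h
        obtain ⟨x, hx, y, hy, hxy⟩ := Finset.one_lt_card.mp h
        simp only [hS, Finset.mem_filter, Finset.mem_range] at hx hy
        obtain ⟨hx1, hx2⟩ := hx
        obtain ⟨hy1, hy2⟩ := hy
        -- wlog x < y
        rcases (show x + 2 ≤ y ∨ y + 2 ≤ x ∨ y = x + 1 ∨ x = y + 1 by omega) with h'|h'|h'|h'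
        · exact step x y h' (by omega) (hx2.trans hy2.symm)
        · exact step y x h' (by omega) (hy2.trans hx2.symm)
        · apply hv
          subst h'
          calc v.1 = w.getD (x+1) d := by rw [← hy2]
            _ = (p x).2 := rfl
            _ = v.2 := by rw [hx2]
        · apply hv
          subst h'
          calc v.1 = w.getD (y+1) d := by rw [← hx2]
            _ = (p y).2 := rfl
            _ = v.2 := by rw [hy2]
    have hsum : ∑ v : Fin k × Fin k, (S.filter (fun i => p i = v)).card
        ≤ ∑ v : Fin k × Fin k, (if v.1 = v.2 then 2 else 1) :=
      Finset.sum_le_sum hbound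
    have hval : ∑ v : Fin k × Fin k, (if v.1 = v.2 then 2 else 1) = k*k + k := by
      have h1 : ∀ v : Fin k × Fin k, (if v.1 = v.2 then 2 else 1) = 1 + (if v.1 = v.2 then 1 else 0) := by
        intro v; split_ifs <;> rfl
      simp_rw [h1]
      rw [Finset.sum_add_distrib, Finset.sum_const, Fintype.sum_prod_type]
      simp [Finset.sum_ite_eq, Finset.card_univ]
      try ring
    have hsq : k^2 = k*k := pow_two k
    omega
end

section
/- For every integer k ≥ 2, there exists a de Bruijn word of order 3 over a k-letter alphabet Σ_k (i.e., a word of length k^3 + 2 containing every word of length 3 over Σ_k exactly once as a factor) that, for every pair of distinct letters a, b ∈ Σ_k, contains either abab or baba as a factor. -/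
namespace DB3
open List

def runT (k p lo : ℕ) : ℕ → List ℕ
  | 0 => []
  | n+1 => runT k p lo n ++ [lo+n, p, k]

lemma infixL {u A : List ℕ} (B : List ℕ) (h : u <:+: A) : u <:+: A ++ B :=
  h.trans ⟨[], B, by simp⟩

lemma infixR {u B : List ℕ} (A : List ℕ) (h : u <:+: B) : u <:+: A ++ B :=
  h.trans ⟨A, [], by simp⟩

lemma glue_infix {s t A B w : List ℕ} (hs : s <:+ A) (ht : t <+: B)
    (h : A ++ B <:+: w) : s ++ t <:+: w := by
  obtain ⟨z, rfl⟩ := hs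
  obtain ⟨u, rfl⟩ := ht
  exact List.IsInfix.trans ⟨z, u, by simp⟩ h

lemma sub_infix {u v w : List ℕ} (h1 : u <:+: v) (h2 : v <:+: w) : u <:+: w := h1.trans h2

lemma runT_head (k p lo : ℕ) : ∀ n, 1 ≤ n → [lo, p, k] <+: runT k p lo n
  | 1, _ => by simp [runT]
  | n+2, _ => ((runT_head k p lo (n+1) (by omega)).trans (List.prefix_append _ _))

lemma runT_last (k p lo n : ℕ) : [lo+n, p, k] <:+ runT k p lo (n+1) := ⟨runT k p lo n, rfl⟩

lemma runT_sufpk (k p lo n : ℕ) (h : 1 ≤ n) : [p, k] <:+ runT k p lo n := by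
  obtain ⟨m, rfl⟩ : ∃ m, n = m + 1 := ⟨n - 1, by omega⟩
  have h1 : [p,k] <:+ [lo+m,p,k] := ⟨[lo+m], rfl⟩
  exact h1.trans (runT_last k p lo m)

lemma runT_chunk (k p lo : ℕ) : ∀ n i, i < n → [lo+i, p, k] <:+: runT k p lo n
  | n+1, i, h => by
    rcases Nat.lt_or_ge i n with h' | h'
    · exact infixL _ (runT_chunk k p lo n i h')
    · have : i = n := by omega
      subst this
      exact infixR _ (by simp)

lemma runT_junc (k p lo : ℕ) : ∀ n i, i+1 < n → [p, k, lo+(i+1), p, k] <:+: runT k p lo n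
  | n+1, i, h => by
    rcases Nat.lt_or_ge (i+1) n with h' | h'
    · exact infixL _ (runT_junc k p lo n i h')
    · have hn : n = i + 1 := by omega
      subst hn
      show [p,k] ++ [lo+(i+1),p,k] <:+: runT k p lo (i+1) ++ [lo+(i+1), p, k]
      exact glue_infix (runT_sufpk k p lo (i+1) (by omega)) (List.prefix_refl _)
        (List.infix_refl _)

end DB3

namespace DB3
open List

def secbody (k p : ℕ) : List ℕ := [k,p,k] ++ runT k p p (k-p) ++ runT k p 1 (p-1)

lemma secbody_prefix (k p : ℕ) (hp1 : 1 ≤ p) (hpk : p < k) :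
    [k,p,k,p,p,k] <+: secbody k p := by
  obtain ⟨z, hz⟩ := runT_head k p p (k-p) (by omega)
  exact ⟨z ++ runT k p 1 (p-1), by simp [secbody, ← hz]⟩

lemma secbody_sufpk (k p : ℕ) (hp1 : 1 ≤ p) (hpk : p < k) : [p,k] <:+ secbody k p := by
  rcases Nat.lt_or_ge p 2 with hp | hp
  · have hp' : p = 1 := by omega
    subst hp'
    have : runT k 1 1 (1-1) = [] := rfl
    have h1 : [1,k] <:+ runT k 1 1 (k-1) := runT_sufpk k 1 1 (k-1) (by omega)
    exact h1.trans ⟨[k,1,k], by simp [secbody, runT]⟩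
  · have h1 : [p,k] <:+ runT k p 1 (p-1) := runT_sufpk k p 1 (p-1) (by omega)
    exact h1.trans ⟨[k,p,k] ++ runT k p p (k-p), by simp [secbody]⟩

lemma secbody_junc (k p b : ℕ) (hp1 : 1 ≤ p) (hpk : p < k) (hb1 : 1 ≤ b) (hbk : b < k)
    (hne : b ≠ p) : [p,k,b,p,k] <:+: secbody k p := by
  unfold secbody
  rcases Nat.lt_or_ge p b with h | h
  · have hj := runT_junc k p p (k-p) (b-p-1) (by omega)
    have e : p + (b-p-1+1) = b := by omega
    rw [e] at hj
    exact infixL _ (infixR [k,p,k] hj)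
  · have hbp : b < p := by omega
    rcases Nat.lt_or_ge b 2 with hb2 | hb2
    · have hb' : b = 1 := by omega
      subst hb'
      refine glue_infix (runT_sufpk k p p (k-p) (by omega))
        (runT_head k p 1 (p-1) (by omega)) ?_
      exact ⟨[k,p,k], [], by simp [secbody]⟩
    · have hj := runT_junc k p 1 (p-1) (b-2) (by omega)
      have e : 1 + (b-2+1) = b := by omega
      rw [e] at hj
      exact infixR ([k,p,k] ++ runT k p p (k-p)) hj

lemma secbody_pkb (k p b : ℕ) (hp1 : 1 ≤ p) (hpk : p < k) (hb1 : 1 ≤ b) (hbk : b < k) :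
    [p,k,b] <:+: secbody k p := by
  by_cases hbp : b = p
  · subst hbp
    exact sub_infix ⟨[k], [b,k], rfl⟩ (secbody_prefix k b hp1 hpk).isInfix
  · exact sub_infix ⟨[], [p,k], rfl⟩ (secbody_junc k p b hp1 hpk hb1 hbk hbp)

lemma secbody_kbp (k p b : ℕ) (hp1 : 1 ≤ p) (hpk : p < k) (hb1 : 1 ≤ b) (hbk : b < k) :
    [k,b,p] <:+: secbody k p := by
  by_cases hbp : b = p
  · subst hbp
    exact sub_infix ⟨[k,b], [k], rfl⟩ (secbody_prefix k b hp1 hpk).isInfix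
  · exact sub_infix ⟨[p], [k], rfl⟩ (secbody_junc k p b hp1 hpk hb1 hbk hbp)

lemma secbody_xpk (k p x : ℕ) (hp1 : 1 ≤ p) (hpk : p < k) (hx1 : 1 ≤ x) (hxk : x < k) :
    [x,p,k] <:+: secbody k p := by
  unfold secbody
  rcases Nat.lt_or_ge x p with h | h
  · have hc := runT_chunk k p 1 (p-1) (x-1) (by omega)
    have e : 1 + (x-1) = x := by omega
    rw [e] at hc
    exact infixR ([k,p,k] ++ runT k p p (k-p)) hc
  · have hc := runT_chunk k p p (k-p) (x-p) (by omega)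
    have e : p + (x-p) = x := by omega
    rw [e] at hc
    exact infixL _ (infixR [k,p,k] hc)

end DB3

namespace DB3
open List

def sec (k p : ℕ) : List ℕ := secbody k p ++ [0,p+1,k]

def secs (k : ℕ) : ℕ → List ℕ
  | 0 => []
  | n+1 => secs k n ++ sec k (n+1)

def lastsec (k : ℕ) : List ℕ := secbody k (k-1) ++ [0,0]

def Uword (k : ℕ) : List ℕ :=
  [0,0,k] ++ runT k 0 1 (k-1) ++ [k,k,0,k] ++ [0,1,k] ++ secs k (k-2) ++ lastsec k

lemma secs_decomp (k : ℕ) : ∀ n p, 1 ≤ p → p ≤ n →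
    ∃ z, secs k n = secs k (p-1) ++ (sec k p ++ z)
  | 0, _, h1, h2 => by omega
  | n+1, p, h1, h2 => by
    rcases Nat.lt_or_ge p (n+1) with h | h
    · obtain ⟨z, hz⟩ := secs_decomp k n p h1 (by omega)
      exact ⟨z ++ sec k (n+1), by simp [secs, hz, List.append_assoc]⟩
    · have hp : p = n+1 := by omega
      subst hp
      exact ⟨[], by simp [secs]⟩

lemma U1 (k : ℕ) : [0,0,k] ++ runT k 0 1 (k-1) <+: Uword k :=
  ⟨[k,k,0,k] ++ [0,1,k] ++ secs k (k-2) ++ lastsec k, by simp [Uword, List.append_assoc]⟩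

lemma U2 (k : ℕ) : runT k 0 1 (k-1) ++ [k,k,0,k] <:+: Uword k :=
  ⟨[0,0,k], [0,1,k] ++ secs k (k-2) ++ lastsec k, by simp [Uword, List.append_assoc]⟩

lemma U3 (k : ℕ) : [k,k,0,k] ++ [0,1,k] <:+: Uword k :=
  ⟨[0,0,k] ++ runT k 0 1 (k-1), secs k (k-2) ++ lastsec k, by simp [Uword, List.append_assoc]⟩

lemma U6 (k p : ℕ) (h1 : 1 ≤ p) (h2 : p ≤ k-2) :
    ([0,1,k] ++ secs k (p-1)) ++ sec k p <:+: Uword k := by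
  obtain ⟨z, hz⟩ := secs_decomp k (k-2) p h1 h2
  exact ⟨[0,0,k] ++ runT k 0 1 (k-1) ++ [k,k,0,k], z ++ lastsec k,
    by simp [Uword, hz, List.append_assoc]⟩

lemma U4 (k p : ℕ) (h1 : 1 ≤ p) (h2 : p ≤ k-2) : sec k p <:+: Uword k := by
  have h := U6 k p h1 h2
  exact sub_infix ⟨[0,1,k] ++ secs k (p-1), [], by simp⟩ h

lemma U7 (k : ℕ) : ([0,1,k] ++ secs k (k-2)) ++ lastsec k <:+: Uword k :=
  ⟨[0,0,k] ++ runT k 0 1 (k-1) ++ [k,k,0,k], [], by simp [Uword, List.append_assoc]⟩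

lemma U5 (k : ℕ) : lastsec k <:+: Uword k :=
  sub_infix ⟨[0,1,k] ++ secs k (k-2), [], by simp⟩ (U7 k)

lemma secsuf (k p : ℕ) (h1 : 1 ≤ p) (h2 : p ≤ k-1) :
    [p,k] <:+ [0,1,k] ++ secs k (p-1) := by
  rcases Nat.lt_or_ge p 2 with h | h
  · have hp : p = 1 := by omega
    subst hp
    exact ⟨[0], by simp [secs]⟩
  · obtain ⟨m, hm⟩ : ∃ m, p - 1 = m + 1 := ⟨p-2, by omega⟩
    rw [hm]
    have e : m + 1 + 1 = p := by omega
    have hx : [p,k] <:+ sec k (m+1) := by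
      rw [sec, e]
      exact ⟨secbody k (m+1) ++ [0], by simp⟩
    exact hx.trans ⟨[0,1,k] ++ secs k m, by simp [secs, List.append_assoc]⟩

end DB3

namespace DB3
open List

lemma U_secbody (k p : ℕ) (h1 : 1 ≤ p) (h2 : p ≤ k-1) : secbody k p <:+: Uword k := by
  rcases Nat.lt_or_ge p (k-1) with h | h
  · exact sub_infix ⟨[], [0,p+1,k], by simp [sec]⟩ (U4 k p h1 (by omega))
  · have : p = k-1 := by omega
    subst this
    exact sub_infix ⟨[], [0,0], by simp [lastsec]⟩ (U5 k)

lemma U_secjunc (k p : ℕ) (hk : 2 ≤ k) (h1 : 1 ≤ p) (h2 : p ≤ k-1) :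
    [p,k,k,p,k,p,p,k] <:+: Uword k := by
  have hpk : p < k := by omega
  have hpre : [k,p,k,p,p,k] <+: secbody k p := secbody_prefix k p h1 hpk
  rcases Nat.lt_or_ge p (k-1) with h | h
  · have hB : [k,p,k,p,p,k] <+: sec k p := hpre.trans (List.prefix_append _ _)
    exact glue_infix (secsuf k p h1 h2) hB (U6 k p h1 (by omega))
  · have hpe : p = k-1 := by omega
    subst hpe
    have hB : [k,k-1,k,k-1,k-1,k] <+: lastsec k := hpre.trans (List.prefix_append _ _)
    exact glue_infix (secsuf k (k-1) h1 h2) hB (U7 k)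

lemma U_jumpjunc (k p : ℕ) (hk : 2 ≤ k) (h1 : 1 ≤ p) (h2 : p ≤ k-2) :
    [p,k,0,p+1,k] <:+: Uword k := by
  have h := U4 k p h1 h2
  rw [sec] at h
  exact glue_infix (secbody_sufpk k p h1 (by omega)) (List.prefix_refl _) h

lemma U_exitjunc (k : ℕ) (hk : 2 ≤ k) : [k-1,k,0,0] <:+: Uword k := by
  have h := U5 k
  rw [lastsec] at h
  exact glue_infix (secbody_sufpk k (k-1) (by omega) (by omega)) (List.prefix_refl _) h

lemma U_entry (k : ℕ) (hk : 2 ≤ k) : [0,0,k,1,0,k] <:+: Uword k := by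
  obtain ⟨z, hz⟩ := runT_head k 0 1 (k-1) (by omega)
  refine sub_infix ?_ (U1 k).isInfix
  exact ⟨[], z, by simp [← hz]⟩

lemma U_run0junc (k b : ℕ) (hk : 2 ≤ k) (hb2 : 2 ≤ b) (hbk : b < k) :
    [0,k,b,0,k] <:+: Uword k := by
  have hj := runT_junc k 0 1 (k-1) (b-2) (by omega)
  have e : 1 + (b-2+1) = b := by omega
  rw [e] at hj
  exact sub_infix hj (sub_infix ⟨[], [k,k,0,k], rfl⟩ (U2 k))

lemma U_special (k : ℕ) (hk : 2 ≤ k) : [0,k,k,k,0,k] <:+: Uword k := by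
  refine glue_infix (runT_sufpk k 0 1 (k-1) (by omega)) (List.prefix_refl _) (U2 k)

lemma U_specE (k : ℕ) (hk : 2 ≤ k) : [k,0,k,0,1] <:+: Uword k := by
  have h : [k,0,k] ++ [0,1] <:+: Uword k :=
    glue_infix (⟨[k], rfl⟩ : [k,0,k] <:+ [k,k,0,k]) (⟨[k], rfl⟩ : [0,1] <+: [0,1,k]) (U3 k)
  exact h

lemma U_jumpblock (k b : ℕ) (hk : 2 ≤ k) (hb2 : 2 ≤ b) (hbk : b ≤ k-1) :
    [0,b,k] <:+: Uword k := by
  have h := U4 k (b-1) (by omega) (by omega)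
  rw [sec] at h
  have e : b - 1 + 1 = b := by omega
  rw [e] at h
  exact sub_infix ⟨secbody k (b-1), [], by simp⟩ h

lemma U_cover (k a b c : ℕ) (hk : 2 ≤ k) (ha : a ≤ k) (hb : b ≤ k) (hc : c ≤ k)
    (h : a = k ∨ b = k ∨ c = k) : [a,b,c] <:+: Uword k := by
  by_cases hak : a = k <;> by_cases hbk : b = k <;> by_cases hck : c = k
  · -- kkk
    rw [hak, hbk, hck]
    exact sub_infix ⟨[0], [0,k], rfl⟩ (U_special k hk)
  · -- kk c
    rw [hak, hbk]
    rcases Nat.eq_zero_or_pos c with hc0 | hc1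
    · subst hc0
      exact sub_infix ⟨[0,k], [k], rfl⟩ (U_special k hk)
    · exact sub_infix ⟨[c], [k,c,c,k], rfl⟩ (U_secjunc k c hk hc1 (by omega))
  · -- k b k
    rw [hak, hck]
    rcases Nat.eq_zero_or_pos b with hb0 | hb1
    · subst hb0
      exact sub_infix ⟨[0,k,k], [], rfl⟩ (U_special k hk)
    · exact sub_infix ⟨[b,k], [b,b,k], rfl⟩ (U_secjunc k b hk hb1 (by omega))
  · -- k b c
    rw [hak]
    rcases Nat.eq_zero_or_pos b with hb0 | hb1
    · subst hb0
      rcases Nat.eq_zero_or_pos c with hc0 | hc1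
      · subst hc0
        exact sub_infix ⟨[k-1], [], rfl⟩ (U_exitjunc k hk)
      · rcases Nat.lt_or_ge c 2 with hc2 | hc2
        · have : c = 1 := by omega
          subst this
          exact sub_infix ⟨[k,0], [], rfl⟩ (U_specE k hk)
        · have hj := U_jumpjunc k (c-1) hk (by omega) (by omega)
          have e : c - 1 + 1 = c := by omega
          rw [e] at hj
          exact sub_infix ⟨[c-1], [k], rfl⟩ hj
    · rcases Nat.eq_zero_or_pos c with hc0 | hc1
      · subst hc0
        rcases Nat.lt_or_ge b 2 with hb2 | hb2
        · have : b = 1 := by omega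
          subst this
          exact sub_infix ⟨[0,0], [k], rfl⟩ (U_entry k hk)
        · exact sub_infix ⟨[0], [k], rfl⟩ (U_run0junc k b hk hb2 (by omega))
      · exact sub_infix (secbody_kbp k c b hc1 (by omega) hb1 (by omega))
          (U_secbody k c hc1 (by omega))
  · -- a k k
    rw [hbk, hck]
    rcases Nat.eq_zero_or_pos a with ha0 | ha1
    · subst ha0
      exact sub_infix ⟨[], [k,0,k], rfl⟩ (U_special k hk)
    · exact sub_infix ⟨[], [a,k,a,a,k], rfl⟩ (U_secjunc k a hk ha1 (by omega))
  · -- a k c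
    rw [hbk]
    rcases Nat.eq_zero_or_pos a with ha0 | ha1
    · subst ha0
      rcases Nat.eq_zero_or_pos c with hc0 | hc1
      · subst hc0
        exact sub_infix ⟨[k], [1], rfl⟩ (U_specE k hk)
      · rcases Nat.lt_or_ge c 2 with hc2 | hc2
        · have : c = 1 := by omega
          subst this
          exact sub_infix ⟨[0], [0,k], rfl⟩ (U_entry k hk)
        · exact sub_infix ⟨[], [0,k], rfl⟩ (U_run0junc k c hk hc2 (by omega))
    · rcases Nat.eq_zero_or_pos c with hc0 | hc1
      · subst hc0
        rcases Nat.lt_or_ge a (k-1) with hak1 | hak1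
        · have hj := U_jumpjunc k a hk ha1 (by omega)
          exact sub_infix ⟨[], [a+1,k], rfl⟩ hj
        · have : a = k-1 := by omega
          subst this
          exact sub_infix ⟨[], [0], rfl⟩ (U_exitjunc k hk)
      · exact sub_infix (secbody_pkb k a c ha1 (by omega) hc1 (by omega))
          (U_secbody k a ha1 (by omega))
  · -- a b k
    rw [hck]
    rcases Nat.eq_zero_or_pos a with ha0 | ha1
    · subst ha0
      rcases Nat.eq_zero_or_pos b with hb0 | hb1
      · subst hb0
        exact sub_infix ⟨[], [1,0,k], rfl⟩ (U_entry k hk)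
      · rcases Nat.lt_or_ge b 2 with hb2 | hb2
        · have : b = 1 := by omega
          subst this
          exact sub_infix ⟨[k,k,0,k], [], by simp⟩ (U3 k)
        · exact U_jumpblock k b hk hb2 (by omega)
    · rcases Nat.eq_zero_or_pos b with hb0 | hb1
      · subst hb0
        have hc2 := runT_chunk k 0 1 (k-1) (a-1) (by omega)
        have e : 1 + (a-1) = a := by omega
        rw [e] at hc2
        exact sub_infix hc2 (sub_infix ⟨[0,0,k], [], by simp⟩ (U1 k).isInfix)
      · exact sub_infix (secbody_xpk k b a hb1 (by omega) ha1 (by omega))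
          (U_secbody k b hb1 (by omega))
  · omega

lemma U_caca (k a : ℕ) (hk : 2 ≤ k) (ha : a < k) : [k,a,k,a] <:+: Uword k := by
  rcases Nat.eq_zero_or_pos a with ha0 | ha1
  · subst ha0
    exact sub_infix ⟨[], [1], rfl⟩ (U_specE k hk)
  · exact sub_infix ⟨[a,k], [a,k], rfl⟩ (U_secjunc k a hk ha1 (by omega))

end DB3

namespace DB3
open List

def base : List ℕ := [0,0,0,1,0,1,1,1,0,0]

def Wrec : ℕ → List ℕ
  | 0 => base
  | n+1 => Wrec n ++ (Uword (n+2)).drop 2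

@[simp] lemma runT_length (k p lo n : ℕ) : (runT k p lo n).length = 3*n := by
  induction n with
  | zero => rfl
  | succ n ih => simp [runT, ih]; omega

lemma secbody_length (k p : ℕ) (h1 : 1 ≤ p) (h2 : p ≤ k) :
    (secbody k p).length = 3*k := by
  simp [secbody]; omega

lemma secs_length (k : ℕ) : ∀ n, n ≤ k - 1 → (secs k n).length = n * (3*k+3)
  | 0, _ => by simp [secs]
  | n+1, h => by
    have ih := secs_length k n (by omega)
    have hb := secbody_length k (n+1) (by omega) (by omega)
    simp [secs, sec, hb, ih]
    ring

lemma Uword_length (k : ℕ) (hk : 2 ≤ k) :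
    (Uword k).length = 3*k^2 + 3*k + 3 := by
  obtain ⟨m, rfl⟩ : ∃ m, k = m + 2 := ⟨k - 2, by omega⟩
  have e2 : (m+2) - 2 = m := by omega
  have e1 : (m+2) - 1 = m + 1 := by omega
  have h1 := secs_length (m+2) m (by omega)
  have h2 := secbody_length (m+2) (m+1) (by omega) (by omega)
  simp [Uword, lastsec, e1, e2, h1, h2]
  ring

lemma U_firsttwo (k : ℕ) : Uword k = [0,0] ++ (Uword k).drop 2 := rfl

lemma U_endzero (k : ℕ) : ∃ z, Uword k = z ++ [0,0] :=
  ⟨[0,0,k] ++ runT k 0 1 (k-1) ++ [k,k,0,k] ++ [0,1,k] ++ secs k (k-2) ++ secbody k (k-1),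
    by simp [Uword, lastsec, List.append_assoc]⟩

lemma Wrec_endzero : ∀ n, ∃ z, Wrec n = z ++ [0,0]
  | 0 => ⟨[0,0,0,1,0,1,1,1], rfl⟩
  | n+1 => by
    obtain ⟨y, hy⟩ := Wrec_endzero n
    obtain ⟨z, hz⟩ := U_endzero (n+2)
    refine ⟨y ++ [0,0] ++ (z.drop 2), ?_⟩
    have hzlen : 2 ≤ z.length := by
      have h1 : (Uword (n+2)).length = 3*(n+2)^2 + 3*(n+2) + 3 := Uword_length (n+2) (by omega)
      have h2 : (Uword (n+2)).length = z.length + 2 := by rw [hz]; simp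
      omega
    have hdrop : (Uword (n+2)).drop 2 = z.drop 2 ++ [0,0] := by
      rw [hz, List.drop_append_of_le_length hzlen]
    show Wrec n ++ (Uword (n+2)).drop 2 = _
    rw [hy, hdrop]
    simp [List.append_assoc]

lemma U_suffix_Wrec (n : ℕ) : Uword (n+2) <:+ Wrec (n+1) := by
  obtain ⟨y, hy⟩ := Wrec_endzero n
  refine ⟨y, ?_⟩
  show y ++ Uword (n+2) = Wrec n ++ (Uword (n+2)).drop 2
  rw [hy, U_firsttwo (n+2)]
  simp [List.append_assoc]

lemma Wrec_prefix (n : ℕ) : Wrec n <+: Wrec (n+1) := List.prefix_append _ _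

lemma Wrec_cover : ∀ n a b c, a ≤ n+1 → b ≤ n+1 → c ≤ n+1 → [a,b,c] <:+: Wrec n
  | 0 => by
    intro a b c ha hb hc
    interval_cases a <;> interval_cases b <;> interval_cases c <;> decide
  | n+1 => by
    intro a b c ha hb hc
    by_cases h : a ≤ n+1 ∧ b ≤ n+1 ∧ c ≤ n+1
    · exact sub_infix (Wrec_cover n a b c h.1 h.2.1 h.2.2) (Wrec_prefix n).isInfix
    · have hor : a = n+2 ∨ b = n+2 ∨ c = n+2 := by omega
      exact sub_infix (U_cover (n+2) a b c (by omega) ha hb hc hor)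
        (U_suffix_Wrec n).isInfix

lemma Wrec_caca : ∀ n a b, a < b → b ≤ n+1 →
    ([b,a,b,a] <:+: Wrec n ∨ [a,b,a,b] <:+: Wrec n)
  | 0 => by
    intro a b hab hb
    have hb1 : b = 1 := by omega
    have ha0 : a = 0 := by omega
    subst hb1; subst ha0
    right; decide
  | n+1 => by
    intro a b hab hb
    rcases Nat.lt_or_ge b (n+2) with h | h
    · rcases Wrec_caca n a b hab (by omega) with h1 | h1
      · exact Or.inl (sub_infix h1 (Wrec_prefix n).isInfix)
      · exact Or.inr (sub_infix h1 (Wrec_prefix n).isInfix)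
    · have hbe : b = n+2 := by omega
      subst hbe
      exact Or.inl (sub_infix (U_caca (n+2) a (by omega) (by omega))
        (U_suffix_Wrec n).isInfix)

lemma runT_mem (k p lo : ℕ) (hp : p ≤ k) : ∀ n, lo + n ≤ k+1 → ∀ x ∈ runT k p lo n, x ≤ k
  | 0, _ => by simp [runT]
  | n+1, h => by
    intro x hx
    simp only [runT, List.mem_append] at hx
    rcases hx with hx | hx
    · exact runT_mem k p lo hp n (by omega) x hx
    · simp at hx; rcases hx with h | h | h <;> omega

lemma secbody_mem (k p : ℕ) (hp1 : 1 ≤ p) (hp : p ≤ k) : ∀ x ∈ secbody k p, x ≤ k := by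
  intro x hx
  simp only [secbody, List.mem_append] at hx
  rcases hx with (hx | hx) | hx
  · simp at hx; rcases hx with h | h | h <;> omega
  · exact runT_mem k p p hp (k-p) (by omega) x hx
  · exact runT_mem k p 1 hp (p-1) (by omega) x hx

lemma sec_mem (k p : ℕ) (hp1 : 1 ≤ p) (hp : p ≤ k-1) : ∀ x ∈ sec k p, x ≤ k := by
  intro x hx
  simp only [sec, List.mem_append] at hx
  rcases hx with hx | hx
  · exact secbody_mem k p hp1 (by omega) x hx
  · simp at hx; rcases hx with h | h | h <;> omega

lemma secs_mem (k : ℕ) : ∀ n, n ≤ k-1 → ∀ x ∈ secs k n, x ≤ k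
  | 0, _ => by intro x hx; simp [secs] at hx
  | n+1, h => by
    intro x hx
    simp only [secs, List.mem_append] at hx
    rcases hx with hx | hx
    · exact secs_mem k n (by omega) x hx
    · exact sec_mem k (n+1) (by omega) (by omega) x hx

lemma Uword_mem (k : ℕ) (hk : 2 ≤ k) : ∀ x ∈ Uword k, x ≤ k := by
  intro x hx
  simp only [Uword, lastsec, List.mem_append] at hx
  rcases hx with ((((hx | hx) | hx) | hx) | hx) | hx | hx
  · simp at hx; rcases hx with h | h | h <;> omega
  · exact runT_mem k 0 1 (by omega) (k-1) (by omega) x hx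
  · simp at hx; rcases hx with h | h | h | h <;> omega
  · simp at hx; rcases hx with h | h | h <;> omega
  · exact secs_mem k (k-2) (by omega) x hx
  · exact secbody_mem k (k-1) (by omega) (by omega) x hx
  · simp at hx; omega

lemma Wrec_mem : ∀ n, ∀ x ∈ Wrec n, x ≤ n+1
  | 0 => by intro x hx; simp [Wrec, base] at hx; rcases hx with h | h | h <;> omega
  | n+1 => by
    intro x hx
    simp only [Wrec, List.mem_append] at hx
    rcases hx with hx | hx
    · have := Wrec_mem n x hx; omega
    · have hx' : x ∈ Uword (n+2) := List.mem_of_mem_drop hx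
      have := Uword_mem (n+2) (by omega) x hx'; omega

end DB3

namespace DB3
open List

lemma Wrec_length : ∀ n, (Wrec n).length = (n+2)^3 + 2
  | 0 => rfl
  | n+1 => by
    have h : ((Uword (n+2)).drop 2).length = 3*(n+2)^2 + 3*(n+2) + 1 := by
      simp [Uword_length (n+2) (by omega)]
    have ih := Wrec_length n
    simp [Wrec, ih, h]
    ring

end DB3


set_option maxHeartbeats 1000000 in
theorem deBruijn_order3_with_abab (k : ℕ) (hk : 2 ≤ k) :
    ∃ w : List (Fin k), w.length = k ^ 3 + 2 ∧
      (∀ x : List (Fin k), x.length = 3 → ∃! i : ℕ, Occurs x w i) ∧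
      (∀ a b : Fin k, a ≠ b → ([a, b, a, b] <:+: w ∨ [b, a, b, a] <:+: w)) := by
  obtain ⟨m, rfl⟩ : ∃ m, k = m + 2 := ⟨k - 2, by omega⟩
  set K := m + 2 with hK
  have hK2 : 2 ≤ K := by omega
  have hK0 : 0 < K := by omega
  set W := DB3.Wrec m with hWdef
  have hWlen : W.length = K^3 + 2 := DB3.Wrec_length m
  have hWmem : ∀ x ∈ W, x < K := fun x hx => by
    have := DB3.Wrec_mem m x hx; omega
  set f : ℕ → Fin K := fun x => ⟨x % K, Nat.mod_lt x hK0⟩ with hf0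
  have hf : ∀ a : Fin K, f a.val = a := fun a => Fin.ext (by
    simp [hf0, Nat.mod_eq_of_lt a.isLt])
  set w : List (Fin K) := W.map f with hw
  have hwlen : w.length = K^3 + 2 := by simp [hw, hWlen]
  -- coverage in Fin form
  have hinf : ∀ a b c : Fin K, [a, b, c] <:+: w := by
    intro a b c
    have h1 : [a.val, b.val, c.val] <:+: W :=
      DB3.Wrec_cover m _ _ _ (by have := a.isLt; omega) (by have := b.isLt; omega)
        (by have := c.isLt; omega)
    have h2 := h1.map f
    simpa [hf] using h2
  -- occurrence extraction
  have occ_get : ∀ (a b c : Fin K) (i : ℕ), Occurs [a,b,c] w i →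
      ∃ (h3 : i + 3 ≤ w.length),
        w[i]'(by omega) = a ∧ w[i+1]'(by omega) = b ∧ w[i+2]'(by omega) = c := by
    intro a b c i hocc
    obtain ⟨t, ht⟩ := hocc
    have hlen3 : i + 3 ≤ w.length := by
      have := congrArg List.length ht
      simp [List.length_drop] at this
      omega
    have hp : [a,b,c] <+: w.drop i := ⟨t, ht⟩
    refine ⟨hlen3, ?_, ?_, ?_⟩
    · have e : w[i]'(by omega) = (w.drop i)[0]'(by simp; omega) := by
        simp [List.getElem_drop]
      rw [e]
      exact (hp.getElem (by simp)).symm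
    · have e : w[i+1]'(by omega) = (w.drop i)[1]'(by simp; omega) := by
        simp [List.getElem_drop]
      rw [e]
      exact (hp.getElem (by simp)).symm
    · have e : w[i+2]'(by omega) = (w.drop i)[2]'(by simp; omega) := by
        simp [List.getElem_drop]
      rw [e]
      exact (hp.getElem (by simp)).symm
  -- the position -> triple map
  set G : Fin (K^3) → (Fin K × Fin K × Fin K) := fun i =>
    (w[(i:ℕ)]'(by have := i.isLt; omega),
     w[(i:ℕ)+1]'(by have := i.isLt; omega),
     w[(i:ℕ)+2]'(by have := i.isLt; omega)) with hG
  have hocc_of_inf : ∀ (a b c : Fin K), ∃ i, Occurs [a,b,c] w i := by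
    intro a b c
    obtain ⟨s, t, hst⟩ := hinf a b c
    refine ⟨s.length, t, ?_⟩
    rw [← hst, List.append_assoc, List.drop_left]
  have hG_surj : Function.Surjective G := by
    rintro ⟨a, b, c⟩
    obtain ⟨i, hocc⟩ := hocc_of_inf a b c
    obtain ⟨h3, h0, h1, h2⟩ := occ_get a b c i hocc
    refine ⟨⟨i, by omega⟩, ?_⟩
    simp only [hG]
    exact Prod.ext h0 (Prod.ext h1 h2)
  have hcard : Fintype.card (Fin (K^3)) = Fintype.card (Fin K × Fin K × Fin K) := by
    simp
    ring
  have hG_inj : Function.Injective G :=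
    ((Fintype.bijective_iff_surjective_and_card G).mpr ⟨hG_surj, hcard⟩).injective
  refine ⟨w, hwlen, ?_, ?_⟩
  · intro x hx
    obtain ⟨a, b, c, rfl⟩ := List.length_eq_three.mp hx
    obtain ⟨i₀, hocc₀⟩ := hocc_of_inf a b c
    refine ⟨i₀, hocc₀, ?_⟩
    intro j hj
    obtain ⟨h3j, hj0, hj1, hj2⟩ := occ_get a b c j hj
    obtain ⟨h30, h00, h01, h02⟩ := occ_get a b c i₀ hocc₀
    have e1 : G ⟨j, by omega⟩ = (a, b, c) := by
      simp only [hG]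
      exact Prod.ext hj0 (Prod.ext hj1 hj2)
    have e2 : G ⟨i₀, by omega⟩ = (a, b, c) := by
      simp only [hG]
      exact Prod.ext h00 (Prod.ext h01 h02)
    have := hG_inj (e1.trans e2.symm)
    simpa using congrArg Fin.val this
  · intro a b hab
    have hv : a.val ≠ b.val := fun h => hab (Fin.ext h)
    rcases Nat.lt_or_ge a.val b.val with h | h
    · rcases DB3.Wrec_caca m a.val b.val h (by have := b.isLt; omega) with h1 | h1
      · right
        have h2 := h1.map f
        simpa [hf] using h2
      · left
        have h2 := h1.map f
        simpa [hf] using h2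
    · have h' : b.val < a.val := by omega
      rcases DB3.Wrec_caca m b.val a.val h' (by have := a.isLt; omega) with h1 | h1
      · left
        have h2 := h1.map f
        simpa [hf] using h2
      · right
        have h2 := h1.map f
        simpa [hf] using h2
end

section
/- For every integer k ≥ 2, every word over a k-letter alphabet of length at least k^{k+1} + k contains a split occurrence of a 1-overlap; that is, S(k,1) ≤ k^{k+1} + k - 1. -/
lemma take_drop_infix {α : Type*} (w : List α) (i m : ℕ) :
    (w.drop i).take m <:+: w :=
  (List.take_prefix m (w.drop i)).isInfix.trans (List.drop_suffix i w).isInfix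

lemma get_congr' {α : Type*} (w : List α) {a b : ℕ} (h : a = b)
    {ha : a < w.length} {hb : b < w.length} : w.get ⟨a, ha⟩ = w.get ⟨b, hb⟩ := by
  subst h; rfl

lemma slice_append {α : Type*} (w : List α) (a m1 m2 : ℕ) :
    (w.drop a).take (m1 + m2) = (w.drop a).take m1 ++ (w.drop (a + m1)).take m2 := by
  rw [List.take_add, List.drop_drop]

lemma slice_eq {α : Type*} (w : List α) (b c m : ℕ) (hb : b + m ≤ w.length)
    (hcm : c + m ≤ w.length)
    (h : ∀ t (ht : t < m), w.get ⟨b + t, by omega⟩ = w.get ⟨c + t, by omega⟩) :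
    (w.drop b).take m = (w.drop c).take m := by
  apply List.ext_getElem
  · simp; omega
  · intro t h1 h2
    simp only [List.getElem_take, List.getElem_drop]
    have ht : t < m := by
      simp only [List.length_take, List.length_drop] at h1; omega
    have := h t ht
    simpa using this

lemma master {α : Type*} (w : List α) (b c m : ℕ) (hm : 1 ≤ m) (hbc : b + m ≤ c)
    (hc : c + m < w.length)
    (heq : ∀ t (ht : t ≤ m), w.get ⟨b + t, by omega⟩ = w.get ⟨c + t, by omega⟩)
    (hba : w.get ⟨b + m, by omega⟩ = w.get ⟨b, by omega⟩) :
    HasSplitTOverlap 1 w := by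
  have hslen : ((w.drop b).take m).length = m := by
    simp [List.length_take, List.length_drop]; omega
  have hsne : (w.drop b).take m ≠ [] := by
    intro h; rw [h] at hslen; simp at hslen; omega
  have hs1 : ((w.drop b).take m).take 1 = [w.get ⟨b, by omega⟩] := by
    rw [List.take_take, min_eq_left hm, List.take_one_drop_eq_of_lt_length (by omega)]
  have hz : (w.drop c).take (m + 1) = (w.drop b).take m ++ ((w.drop b).take m).take 1 := by
    have step1 : (w.drop c).take (m + 1) = (w.drop b).take (m + 1) := by
      apply (slice_eq w b c (m + 1) (by omega) (by omega) ?_).symm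
      intro t ht
      exact heq t (by omega)
    rw [step1, slice_append w b m 1, hs1,
      List.take_one_drop_eq_of_lt_length (show b + m < w.length by omega)]
    rw [hba]
  refine ⟨(w.drop b).take m, (w.drop (b + m)).take (c - (b + m)),
    (w.drop c).take (m + 1), ?_, ?_⟩
  · have h1 : (w.drop b).take m ++ (w.drop (b + m)).take (c - (b + m))
        ++ (w.drop c).take (m + 1)
        = (w.drop b).take (m + ((c - (b + m)) + (m + 1))) := by
      rw [slice_append w b m ((c - (b + m)) + (m + 1)),
        slice_append w (b + m) (c - (b + m)) (m + 1),
        show b + m + (c - (b + m)) = c from by omega, List.append_assoc]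
    rw [h1]
    exact take_drop_infix w b _
  · exact ⟨(w.drop b).take m, hsne, by omega, by rw [hz, List.append_assoc]⟩

theorem S_k_one_bound (k : ℕ) (hk : 2 ≤ k) :
    ∀ w : List (Fin k), k ^ (k + 1) + k ≤ w.length → HasSplitTOverlap 1 w := by
  intro w hw
  set n := w.length with hn
  have hn1 : 1 ≤ k ^ (k + 1) := Nat.one_le_pow _ _ (by omega)
  have hf : ∀ (i : Fin (n - k)) (t : Fin (k + 1)), (i : ℕ) + (t : ℕ) < n := by
    intro i t
    have h1 := i.isLt
    have h2 := t.isLt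
    omega
  set f : Fin (n - k) → (Fin (k + 1) → Fin k) :=
    fun i t => w.get ⟨(i : ℕ) + (t : ℕ), hf i t⟩ with hfdef
  by_cases hinj : Function.Injective f
  · -- all factors distinct: f is bijective, so the constant word appears
    have hcard : Fintype.card (Fin (n - k)) ≤ Fintype.card (Fin (k + 1) → Fin k) :=
      Fintype.card_le_of_injective f hinj
    simp only [Fintype.card_fin, Fintype.card_fun] at hcard
    have hbij : Function.Bijective f := by
      rw [Fintype.bijective_iff_injective_and_card]
      refine ⟨hinj, ?_⟩
      simp only [Fintype.card_fin, Fintype.card_fun]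
      omega
    obtain ⟨i, hi⟩ := hbij.surjective (fun _ => ⟨0, by omega⟩)
    have hiv : ∀ t (ht : t < k + 1), w.get ⟨(i : ℕ) + t, by have := i.isLt; omega⟩
        = ⟨0, by omega⟩ := by
      intro t ht
      exact congrFun hi ⟨t, ht⟩
    have hilt := i.isLt
    apply master w i (i + 1) 1 le_rfl (by omega) (by omega)
    · intro t ht
      have e1 := hiv t (by omega)
      have e2 := hiv (1 + t) (by omega)
      exact e1.trans (e2.symm.trans (get_congr' w (by omega)))
    · have e1 := hiv 1 (by omega)
      have e2 := hiv 0 (by omega)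
      exact e1.trans (e2.symm.trans (get_congr' w (by omega)))
  · -- two equal factors
    rw [Function.not_injective_iff] at hinj
    obtain ⟨i₀, j₀, hfij, hne⟩ := hinj
    obtain ⟨i, j, hij, hfeq⟩ : ∃ i j : Fin (n - k), (i : ℕ) < (j : ℕ) ∧ f i = f j := by
      rcases lt_or_gt_of_ne (Fin.val_ne_of_ne hne) with h | h
      · exact ⟨i₀, j₀, h, hfij⟩
      · exact ⟨j₀, i₀, h, hfij.symm⟩
    have hjlt : (j : ℕ) < n - k := j.isLt
    have hgeq : ∀ t, t < k + 1 → ∀ (h1 : (i : ℕ) + t < n) (h2 : (j : ℕ) + t < n),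
        w.get ⟨(i : ℕ) + t, h1⟩ = w.get ⟨(j : ℕ) + t, h2⟩ := by
      intro t ht h1 h2
      exact congrFun hfeq ⟨t, ht⟩
    by_cases hfar : (i : ℕ) + (k + 1) ≤ (j : ℕ)
    · -- disjoint occurrences: find a repeated letter in the factor
      have hninj : ¬ Function.Injective (f i) := by
        intro h
        have := Fintype.card_le_of_injective _ h
        simp only [Fintype.card_fin] at this
        omega
      rw [Function.not_injective_iff] at hninj
      obtain ⟨p₀, q₀, hvpq, hpqne⟩ := hninj
      obtain ⟨p, q, hpq, hveq⟩ : ∃ p q : Fin (k + 1), (p : ℕ) < (q : ℕ) ∧ f i p = f i q := by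
        rcases lt_or_gt_of_ne (Fin.val_ne_of_ne hpqne) with h | h
        · exact ⟨p₀, q₀, h, hvpq⟩
        · exact ⟨q₀, p₀, h, hvpq.symm⟩
      have hqlt : (q : ℕ) < k + 1 := q.isLt
      have hv : w.get ⟨(i : ℕ) + (p : ℕ), hf i p⟩ = w.get ⟨(i : ℕ) + (q : ℕ), hf i q⟩ := hveq
      apply master w ((i : ℕ) + (p : ℕ)) ((j : ℕ) + (p : ℕ)) ((q : ℕ) - (p : ℕ))
        (by omega) (by omega) (by omega)
      · intro t ht
        have h1 : (i : ℕ) + ((p : ℕ) + t) < n := by omega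
        have h2 : (j : ℕ) + ((p : ℕ) + t) < n := by omega
        have h := hgeq ((p : ℕ) + t) (by omega) h1 h2
        exact (get_congr' w (by omega)).trans (h.trans (get_congr' w (by omega)))
      · exact (get_congr' w (by omega)).trans hv.symm
    · -- overlapping occurrences: local period j - i
      apply master w (i : ℕ) (j : ℕ) ((j : ℕ) - (i : ℕ)) (by omega) (by omega) (by omega)
      · intro t ht
        exact hgeq t (by omega) _ _
      · have h0 := hgeq 0 (by omega) (by omega) (by omega)
        exact (get_congr' w (by omega)).trans (h0.symm.trans (get_congr' w (by omega)))
end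

section
/- For every integer k ≥ 2, every word over a k-letter alphabet of length at least k^{k+1} + k contains a reversed split occurrence of a 1-overlap; that is, R(k,1) ≤ k^{k+1} + k - 1. -/
lemma split_lemma {α : Type*} {w x z : List α} {i j : ℕ}
    (hx : Occurs x w i) (hz : Occurs z w j) (hij : i + x.length ≤ j)
    (hov : IsTOverlap 1 (z ++ x)) : HasRevSplitTOverlap 1 w := by
  set l := w.drop i with hl
  refine ⟨x, (l.drop x.length).take (j - i - x.length), z, ?_, hov⟩
  have hxl : x = l.take x.length := List.prefix_iff_eq_take.1 hx
  have hij' : i ≤ j := le_trans (Nat.le_add_right i x.length) hij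
  have hxy : x ++ (l.drop x.length).take (j - i - x.length) = l.take (j - i) := by
    have h2 : j - i = x.length + (j - i - x.length) := by omega
    rw [h2, List.take_add, ← hxl]
    congr 2
    omega
  have hdj : w.drop j = l.drop (j - i) := by
    rw [hl, List.drop_drop]
    congr 1
    omega
  obtain ⟨t, ht⟩ := hz
  obtain ⟨s, hs⟩ : l <:+ w := List.drop_suffix i w
  have hfull : l = (x ++ (l.drop x.length).take (j - i - x.length)) ++ (z ++ t) := by
    conv_lhs => rw [← List.take_append_drop (j - i) l]
    rw [← hxy, hdj] at *
    rw [← ht]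
  refine ⟨s, t, ?_⟩
  conv_rhs => rw [← hs, hfull]
  simp [List.append_assoc]

lemma take_take_le {α : Type*} (l : List α) {m n : ℕ} (h : m ≤ n) :
    (l.take n).take m = l.take m := by
  rw [List.take_take, inf_eq_left.2 h]

lemma two_windows {k : ℕ} (hk : 2 ≤ k) (w : List (Fin k)) (p q : ℕ)
    (hq : q + k < w.length) (hpq : p < q)
    (heq : (w.drop p).take (k+1) = (w.drop q).take (k+1)) :
    HasRevSplitTOverlap 1 w := by
  have estep : ∀ m, m ≤ k → (w.drop (p+m)).take 1 = (w.drop (q+m)).take 1 := by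
    intro m hm
    have h1 := congrArg (fun l => (l.drop m).take 1) heq
    simp only [List.drop_take, List.drop_drop] at h1
    rwa [take_take_le _ (by omega), take_take_le _ (by omega)] at h1
  by_cases hd : q - p ≤ k
  · -- periodic case: overlap factor
    set d := q - p with hdd
    have hd1 : 1 ≤ d := by omega
    set v := (w.drop p).take d with hv
    have hvlen : v.length = d := by
      rw [hv, List.length_take, List.length_drop]
      omega
    have hvq : (w.drop q).take d = v := by
      calc (w.drop q).take d = ((w.drop q).take (k+1)).take d := (take_take_le _ (by omega)).symm
        _ = ((w.drop p).take (k+1)).take d := by rw [heq]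
        _ = v := by rw [take_take_le _ (by omega), hv]
    have h1 : w.drop p = v ++ w.drop q := by
      conv_lhs => rw [← List.take_append_drop d (w.drop p)]
      rw [List.drop_drop, ← hv]
      congr 2
      omega
    have h2 : w.drop q = v ++ w.drop (q + d) := by
      conv_lhs => rw [← List.take_append_drop d (w.drop q)]
      rw [List.drop_drop, hvq]
    have e3 : v.take 1 = (w.drop (q+d)).take 1 := by
      calc v.take 1 = (w.drop p).take 1 := by rw [hv, take_take_le _ hd1]
        _ = (w.drop q).take 1 := by simpa using estep 0 (by omega)
        _ = (w.drop (p+d)).take 1 := by rw [show p + d = q by omega]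
        _ = (w.drop (q+d)).take 1 := estep d hd
    have key : v.take 1 <+: w.drop (q + d) := by
      rw [e3]
      exact List.take_prefix _ _
    obtain ⟨t, ht⟩ := key
    have hocc : Occurs (v ++ v ++ v.take 1) w p := by
      unfold Occurs
      rw [h1, h2, ← ht]
      simp [List.append_assoc]
    refine split_lemma (z := []) (j := p + (v ++ v ++ v.take 1).length) hocc
      List.nil_prefix le_rfl ?_
    exact ⟨v, by rw [← List.length_pos_iff] at *; omega, by omega, by simp⟩
  · -- disjoint case
    have hq' : p + k + 1 ≤ q := by omega
    set f := (w.drop p).take (k+1) with hf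
    have hflen : f.length = k + 1 := by
      rw [hf, List.length_take, List.length_drop]
      omega
    obtain ⟨i0, j0, hij0, hfij⟩ := Fintype.exists_ne_map_eq_of_card_lt
      (fun t : Fin (k+1) => f.get ⟨t, by omega⟩) (by simp)
    obtain ⟨i, j, hijlt, hij0'⟩ : ∃ i j : ℕ, i < j ∧ ∃ (hi : i < f.length) (hj : j < f.length),
        f.get ⟨i, hi⟩ = f.get ⟨j, hj⟩ := by
      rcases lt_or_gt_of_ne hij0 with h | h
      · exact ⟨i0, j0, h, by omega, by omega, hfij⟩
      · exact ⟨j0, i0, h, by omega, by omega, hfij.symm⟩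
    obtain ⟨hi, hj, hgg⟩ := hij0'
    have hjk : j ≤ k := by omega
    set z := (f.drop i).take (j - i) with hz
    have hone : (f.drop j).take 1 = (f.drop i).take 1 := by
      rw [List.take_one_drop_eq_of_lt_length hi, List.take_one_drop_eq_of_lt_length hj, hgg]
    set x := (f.drop i).take (j - i + 1) with hx
    have h1z : z.take 1 = (f.drop i).take 1 := by
      rw [hz, take_take_le _ (by omega)]
    have hxz : x = z ++ z.take 1 := by
      rw [h1z, ← hone, hx, hz, List.take_add, List.drop_drop,
        show i + (j - i) = j by omega]
    have hdropi : (f.drop i) = (w.drop (p+i)).take (k+1-i) := by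
      rw [hf, List.drop_take, List.drop_drop]
    have hdropi' : (f.drop i) = (w.drop (q+i)).take (k+1-i) := by
      rw [heq, List.drop_take, List.drop_drop]
    have hoccx : Occurs x w (p+i) := by
      unfold Occurs
      rw [hx, hdropi, take_take_le _ (by omega)]
      exact List.take_prefix _ _
    have hoccz : Occurs z w (q+i) := by
      unfold Occurs
      rw [hz, hdropi', take_take_le _ (by omega)]
      exact List.take_prefix _ _
    have hxlen : x.length ≤ j - i + 1 := by
      rw [hx, List.length_take]
      omega
    have hzne : z ≠ [] := by
      rw [← List.length_pos_iff, hz, List.length_take, List.length_drop, hflen]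
      omega
    refine split_lemma hoccx hoccz (by omega) ?_
    exact ⟨z, hzne, by rw [← List.length_pos_iff] at hzne; omega,
      by rw [hxz]; simp [List.append_assoc]⟩

theorem R_k_one_bound (k : ℕ) (hk : 2 ≤ k) :
    ∀ w : List (Fin k), k ^ (k + 1) + k ≤ w.length → HasRevSplitTOverlap 1 w := by
  intro w hw
  haveI : NeZero k := ⟨by omega⟩
  set n := w.length - k with hn
  have hkp : k ≤ k ^ (k+1) := by
    calc k = k ^ 1 := (pow_one k).symm
      _ ≤ k ^ (k+1) := Nat.pow_le_pow_right (by omega) (by omega)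
  have hlen : ∀ i : Fin n, ((w.drop (i:ℕ)).take (k+1)).length = k+1 := by
    intro i
    have := i.2
    rw [List.length_take, List.length_drop]
    omega
  set g : Fin n → List.Vector (Fin k) (k+1) :=
    fun i => ⟨(w.drop (i:ℕ)).take (k+1), hlen i⟩ with hg
  by_cases hinj : Function.Injective g
  · -- all windows distinct ⇒ every word of length k+1 occurs ⇒ 0^(k+1) occurs
    have hcard : Fintype.card (Fin n) = Fintype.card (List.Vector (Fin k) (k+1)) := by
      have h1 := Fintype.card_le_of_injective g hinj
      rw [card_vector, Fintype.card_fin, Fintype.card_fin] at *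
      omega
    have hsurj := ((Fintype.bijective_iff_injective_and_card g).2 ⟨hinj, hcard⟩).2
    obtain ⟨i, hi⟩ := hsurj ⟨List.replicate (k+1) (0 : Fin k), by simp⟩
    have hival : (w.drop (i:ℕ)).take (k+1) = List.replicate (k+1) (0 : Fin k) :=
      congrArg Subtype.val hi
    have hrep : List.replicate (k+1) (0 : Fin k) = [0,0,0] ++ List.replicate (k-2) 0 := by
      rw [show k+1 = 3+(k-2) by omega, List.replicate_add]
      rfl
    have hocc : Occurs [(0:Fin k),0,0] w (i:ℕ) := by
      unfold Occurs
      refine List.IsPrefix.trans ?_ (hival ▸ List.take_prefix (k+1) (w.drop (i:ℕ)))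
      exact ⟨List.replicate (k-2) 0, hrep.symm⟩
    refine split_lemma (z := []) (j := (i:ℕ) + 3) hocc List.nil_prefix (by simp) ?_
    exact ⟨[0], by simp, by simp, rfl⟩
  · obtain ⟨i0, j0, hgij, hne⟩ := Function.not_injective_iff.1 hinj
    have hval : (w.drop (i0:ℕ)).take (k+1) = (w.drop (j0:ℕ)).take (k+1) :=
      congrArg Subtype.val hgij
    have hfne : (i0:ℕ) ≠ (j0:ℕ) := fun h => hne (Fin.ext h)
    rcases lt_or_gt_of_ne hfne with h | h
    · exact two_windows hk w i0 j0 (by have := j0.2; omega) h hval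
    · exact two_windows hk w j0 i0 (by have := i0.2; omega) h hval.symm
end
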